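/- arXiv:2006.02356 — 5 statements merged into one kernel-verified Lean document; each statement's English description precedes it below -/
import Mathlib

section
/- Let d, n ≥ 1 and let x, y ∈ ℤ^{n+1} be two linearly independent primitive vectors. Then the gcd of the 2×2 minors of the matrix whose columns are ν(x) and ν(y) equals the gcd of the 2×2 minors of the matrix whose columns are x and y, where ν = ν_{d,n} is the degree-d Veronese embedding listing all monomials of degree d in the n+1 coordinates. -/
noncomputable section

/-- The index type for monomials of degree `d` in `n+1` variables:
exponent vectors `m : Fin (n+1) → ℕ` with `∑ i, m i = d`. -/
abbrev MonIdx (n d : ℕ) : Type :=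
  {m : Fin (n + 1) → ℕ // m ∈ Finset.Nat.antidiagonalTuple (n + 1) d}

/-- The degree-`d` Veronese embedding: the list of all degree-`d` monomials
evaluated at the coordinates of `x`. -/
def ver (d n : ℕ) (x : Fin (n + 1) → ℤ) : MonIdx n d → ℤ :=
  fun m => ∏ i, x i ^ (m.1 i)

/-- The gcd of all 2×2 minors of the matrix with columns `c₁, c₂`. -/
def minorGcd {ι : Type*} [Fintype ι] (c₁ c₂ : ι → ℤ) : ℤ :=
  Finset.gcd Finset.univ (fun p : ι × ι => c₁ p.1 * c₂ p.2 - c₁ p.2 * c₂ p.1)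

set_option maxHeartbeats 1600000

/-- Pull out one factor from a monomial product. -/
lemma prod_pow_update {R : Type*} [CommMonoid R] {n : ℕ} (a : Fin (n+1) → R)
    (m : Fin (n+1) → ℕ) (i : Fin (n+1)) (hi : m i ≠ 0) :
    (∏ k, a k ^ m k) = a i * ∏ k, a k ^ (Function.update m i (m i - 1)) k := by
  rw [← Finset.mul_prod_erase Finset.univ (fun k => a k ^ m k) (Finset.mem_univ i),
      ← Finset.mul_prod_erase Finset.univ (fun k => a k ^ (Function.update m i (m i - 1)) k)
        (Finset.mem_univ i)]
  have h1 : (∏ k ∈ Finset.univ.erase i, a k ^ m k)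
      = ∏ k ∈ Finset.univ.erase i, a k ^ (Function.update m i (m i - 1)) k := by
    refine Finset.prod_congr rfl fun k hk => ?_
    rw [Function.update_of_ne (Finset.ne_of_mem_erase hk)]
  rw [← h1, ← mul_assoc]
  congr 1
  simp only [Function.update_self]
  conv_lhs => rw [show m i = (m i - 1) + 1 from (Nat.succ_pred_eq_of_ne_zero hi).symm]
  rw [pow_succ]
  exact mul_comm _ _

lemma sum_update_pred {n : ℕ} (m : Fin (n+1) → ℕ) (i : Fin (n+1)) (hi : m i ≠ 0) (d : ℕ)
    (hm : ∑ k, m k = d + 1) : ∑ k, (Function.update m i (m i - 1)) k = d := by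
  rw [Finset.sum_update_of_mem (Finset.mem_univ i)]
  rw [← Finset.add_sum_erase Finset.univ m (Finset.mem_univ i)] at hm
  have : Finset.univ \ {i} = Finset.univ.erase i := by
    ext k; simp [Finset.mem_erase, and_comm]
  rw [this]
  omega

/-- The key swap lemma. -/
lemma swap_prod {R : Type*} [CommRing R] {n : ℕ} (a b : Fin (n+1) → R)
    (hab : ∀ i j, a i * b j = a j * b i) :
    ∀ (d : ℕ) (m m' : Fin (n+1) → ℕ), (∑ i, m i = d) → (∑ i, m' i = d) →
    (∏ i, a i ^ m i) * (∏ i, b i ^ m' i) = (∏ i, a i ^ m' i) * (∏ i, b i ^ m i) := by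
  intro d
  induction d with
  | zero =>
    intro m m' hm hm'
    have h1 : ∀ i ∈ Finset.univ, m i = 0 := Finset.sum_eq_zero_iff.mp hm
    have h2 : ∀ i ∈ Finset.univ, m' i = 0 := Finset.sum_eq_zero_iff.mp hm'
    simp only [Finset.mem_univ, forall_true_left] at h1 h2
    simp [h1, h2]
  | succ d ih =>
    intro m m' hm hm'
    obtain ⟨i, hi⟩ : ∃ i, m i ≠ 0 := by
      by_contra hc
      push_neg at hc
      simp [hc] at hm
    obtain ⟨j, hj⟩ : ∃ j, m' j ≠ 0 := by
      by_contra hc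
      push_neg at hc
      simp [hc] at hm'
    set m₁ := Function.update m i (m i - 1) with hm₁
    set m₁' := Function.update m' j (m' j - 1) with hm₁'
    have hs1 : ∑ k, m₁ k = d := sum_update_pred m i hi d hm
    have hs2 : ∑ k, m₁' k = d := sum_update_pred m' j hj d hm'
    have e1 : (∏ k, a k ^ m k) = a i * ∏ k, a k ^ m₁ k := prod_pow_update a m i hi
    have e2 : (∏ k, b k ^ m' k) = b j * ∏ k, b k ^ m₁' k := prod_pow_update b m' j hj
    have e3 : (∏ k, a k ^ m' k) = a j * ∏ k, a k ^ m₁' k := prod_pow_update a m' j hj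
    have e4 : (∏ k, b k ^ m k) = b i * ∏ k, b k ^ m₁ k := prod_pow_update b m i hi
    rw [e1, e2, e3, e4]
    have hIH := ih m₁ m₁' hs1 hs2
    calc (a i * ∏ k, a k ^ m₁ k) * (b j * ∏ k, b k ^ m₁' k)
        = (a i * b j) * ((∏ k, a k ^ m₁ k) * (∏ k, b k ^ m₁' k)) := by ring
      _ = (a j * b i) * ((∏ k, a k ^ m₁' k) * (∏ k, b k ^ m₁ k)) := by rw [hab, hIH]
      _ = (a j * ∏ k, a k ^ m₁' k) * (b i * ∏ k, b k ^ m₁ k) := by ring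

/-- For `d, n ≥ 1` and linearly independent primitive vectors
`x, y ∈ ℤ^{n+1}`, the gcd of the 2×2 minors of the matrix with columns `ν(x), ν(y)`
equals the gcd of the 2×2 minors of the matrix with columns `x, y`, where `ν` is the
degree-`d` Veronese embedding. -/
theorem stmt2 (d n : ℕ) (hd : 1 ≤ d) (hn : 1 ≤ n) (x y : Fin (n + 1) → ℤ)
    (hx : Finset.gcd Finset.univ x = 1) (hy : Finset.gcd Finset.univ y = 1)
    (h : LinearIndependent ℤ ![x, y]) :
    minorGcd (ver d n x) (ver d n y) = minorGcd x y := by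
  obtain ⟨e, rfl⟩ : ∃ e, d = e + 1 := ⟨d - 1, by omega⟩
  set d := e + 1 with hd'
  set G := minorGcd x y with hG
  set V := minorGcd (ver d n x) (ver d n y) with hV
  have hGm : ∀ i j : Fin (n+1), G ∣ x i * y j - x j * y i := fun i j =>
    Finset.gcd_dvd (Finset.mem_univ ((i, j) : _ × _))
  have hVm : ∀ m m' : MonIdx n d,
      V ∣ ver d n x m * ver d n y m' - ver d n x m' * ver d n y m := fun m m' =>
    Finset.gcd_dvd (Finset.mem_univ ((m, m') : _ × _))
  -- Step A: G ∣ V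
  have hGV : G ∣ V := by
    apply Finset.dvd_gcd
    rintro ⟨m, m'⟩ -
    let φ : ℤ →+* ℤ ⧸ Ideal.span ({G} : Set ℤ) := Ideal.Quotient.mk _
    rw [← Ideal.Quotient.eq_zero_iff_dvd]
    have hm : ∑ i, m.1 i = d := Finset.Nat.mem_antidiagonalTuple.mp m.2
    have hm' : ∑ i, m'.1 i = d := Finset.Nat.mem_antidiagonalTuple.mp m'.2
    have hab : ∀ i j, φ (x i) * φ (y j) = φ (x j) * φ (y i) := by
      intro i j
      have h0 : φ (x i * y j - x j * y i) = 0 :=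
        (Ideal.Quotient.eq_zero_iff_dvd _ _).mpr (hGm i j)
      rw [map_sub, map_mul, map_mul, sub_eq_zero] at h0
      exact h0
    have hkey := swap_prod (fun i => φ (x i)) (fun i => φ (y i)) hab d m.1 m'.1 hm hm'
    show φ (ver d n x m * ver d n y m' - ver d n x m' * ver d n y m) = 0
    simp only [ver, map_sub, map_mul, map_prod, map_pow]
    rw [sub_eq_zero]
    exact hkey
  -- monomial indices
  have hsingle : ∀ c : Fin (n+1), (fun k => if k = c then d else 0)
      ∈ Finset.Nat.antidiagonalTuple (n + 1) d := by
    intro c; rw [Finset.Nat.mem_antidiagonalTuple]; simp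
  have hmix : ∀ c b : Fin (n+1), b ≠ c →
      (fun k => (if k = c then e else 0) + (if k = b then 1 else 0))
      ∈ Finset.Nat.antidiagonalTuple (n + 1) d := by
    intro c b hbc; rw [Finset.Nat.mem_antidiagonalTuple]
    rw [Finset.sum_add_distrib]; simp; exact hd'.symm
  have ver_single : ∀ (z : Fin (n+1) → ℤ) (c : Fin (n+1)),
      ver d n z ⟨_, hsingle c⟩ = z c ^ d := by
    intro z c; simp [ver, pow_ite]
  have ver_mix : ∀ (z : Fin (n+1) → ℤ) (c b : Fin (n+1)) (hbc : b ≠ c),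
      ver d n z ⟨_, hmix c b hbc⟩ = z c ^ e * z b := by
    intro z c b hbc
    simp only [ver]
    rw [show (∏ i, z i ^ ((if i = c then e else 0) + (if i = b then 1 else 0)))
        = (∏ i, z i ^ (if i = c then e else 0)) * ∏ i, z i ^ (if i = b then 1 else 0) by
      rw [← Finset.prod_mul_distrib]; exact Finset.prod_congr rfl fun k _ => pow_add _ _ _]
    simp [pow_ite]
  -- Step B: V ∣ G
  have hVG : V ∣ G := by
    apply Finset.dvd_gcd
    rintro ⟨a, b⟩ -
    show V ∣ x a * y b - x b * y a
    rw [← Int.natAbs_dvd_natAbs, Nat.dvd_iff_prime_pow_dvd_dvd]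
    intro p k hp hpk
    rcases Nat.eq_zero_or_pos k with rfl | hk
    · simpa using Nat.one_dvd _
    have hpkV : ((p : ℤ)) ^ k ∣ V := by
      have h1 := Int.natCast_dvd_natCast.mpr hpk
      rw [Nat.cast_pow] at h1
      exact h1.trans (Int.natAbs_dvd.mpr dvd_rfl)
    have hpV : ((p : ℤ)) ∣ V := (dvd_pow_self ((p:ℤ)) hk.ne').trans hpkV
    have hpI : Prime ((p : ℤ)) := Nat.prime_iff_prime_int.mp hp
    suffices hs : ((p:ℤ))^k ∣ x a * y b - x b * y a by
      have h2 := Int.natAbs_dvd_natAbs.mpr hs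
      simpa [Int.natAbs_pow] using h2
    by_cases hab : a = b
    · subst hab; simp
    by_cases hcase : ∃ c, ¬ (p:ℤ) ∣ x c ∧ ¬ (p:ℤ) ∣ y c
    · obtain ⟨c, hcx, hcy⟩ := hcase
      have key : ∀ b' : Fin (n+1), ((p:ℤ))^k ∣ x c * y b' - x b' * y c := by
        intro b'
        by_cases hbc : b' = c
        · subst hbc; simp
        · have hdvd := hpkV.trans (hVm ⟨_, hsingle c⟩ ⟨_, hmix c b' hbc⟩)
          rw [ver_single x c, ver_single y c, ver_mix x c b' hbc, ver_mix y c b' hbc] at hdvd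
          have hfac : x c ^ d * (y c ^ e * y b') - x c ^ e * x b' * y c ^ d
              = (x c ^ e * y c ^ e) * (x c * y b' - x b' * y c) := by
            rw [hd']; ring
          rw [hfac] at hdvd
          have hcop : IsCoprime ((p:ℤ)^k) (x c ^ e * y c ^ e) := by
            apply IsCoprime.pow_left
            exact ((hpI.coprime_iff_not_dvd.mpr hcx).pow_right).mul_right
              ((hpI.coprime_iff_not_dvd.mpr hcy).pow_right)
          exact hcop.dvd_of_dvd_mul_left hdvd
      have hrel : x c * (x a * y b - x b * y a)
          = x a * (x c * y b - x b * y c) - x b * (x c * y a - x a * y c) := by ring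
      have hdvd2 : ((p:ℤ))^k ∣ x c * (x a * y b - x b * y a) := by
        rw [hrel]
        exact dvd_sub ((key b).mul_left _) ((key a).mul_left _)
      have hcop : IsCoprime ((p:ℤ)^k) (x c) :=
        (hpI.coprime_iff_not_dvd.mpr hcx).pow_left
      exact hcop.dvd_of_dvd_mul_left hdvd2
    · exfalso
      push_neg at hcase
      have hix : ∃ i, ¬ (p:ℤ) ∣ x i := by
        by_contra hc
        push_neg at hc
        have hdg : (p:ℤ) ∣ Finset.gcd Finset.univ x := Finset.dvd_gcd fun i _ => hc i
        rw [hx] at hdg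
        exact hpI.not_dvd_one hdg
      have hjy : ∃ j, ¬ (p:ℤ) ∣ y j := by
        by_contra hc
        push_neg at hc
        have hdg : (p:ℤ) ∣ Finset.gcd Finset.univ y := Finset.dvd_gcd fun j _ => hc j
        rw [hy] at hdg
        exact hpI.not_dvd_one hdg
      obtain ⟨i, hix⟩ := hix
      obtain ⟨j, hjy⟩ := hjy
      have hjx : (p:ℤ) ∣ x j := by
        by_contra hc
        exact hjy (hcase j hc)
      have hdvd := hpV.trans (hVm ⟨_, hsingle i⟩ ⟨_, hsingle j⟩)
      rw [ver_single x i, ver_single y j, ver_single x j, ver_single y i] at hdvd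
      have h1 : (p:ℤ) ∣ x j ^ d * y i ^ d := ((dvd_pow hjx (by omega)).mul_right _)
      have h2 : (p:ℤ) ∣ x i ^ d * y j ^ d := by
        have h3 := dvd_add hdvd h1
        rwa [sub_add_cancel] at h3
      rcases hpI.dvd_mul.mp h2 with h4 | h4
      · exact hix (hpI.dvd_of_dvd_pow h4)
      · exact hjy (hpI.dvd_of_dvd_pow h4)
  have hVnn : 0 ≤ V := by
    rw [hV, minorGcd, ← Finset.normalize_gcd, ← Int.abs_eq_normalize]; exact abs_nonneg _
  have hGnn : 0 ≤ G := by
    rw [hG, minorGcd, ← Finset.normalize_gcd, ← Int.abs_eq_normalize]; exact abs_nonneg _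
  exact Int.dvd_antisymm hVnn hGnn hVG hGV
end
end

section
/- Let N ≥ 2, Q ≥ 1, and let c, d ∈ ℤ^N be two linearly independent primitive vectors. Then the lattice Λ = { y ∈ ℤ^N : ⟨c,y⟩ ≡ 0 mod Q and ⟨d,y⟩ ≡ 0 mod Q } has determinant Q² / gcd(G(c,d), Q), where G(c,d) is the gcd of the 2×2 minors of the matrix with columns c and d. -/
noncomputable section

/-- Euclidean inner product of two integer vectors. -/
def idot {ι : Type*} [Fintype ι] (x y : ι → ℤ) : ℤ := ∑ i, x i * y i

lemma idot_add {ι : Type*} [Fintype ι] (c a b : ι → ℤ) :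
    idot c (a + b) = idot c a + idot c b := by
  simp [idot, mul_add, Finset.sum_add_distrib]

lemma idot_zero {ι : Type*} [Fintype ι] (c : ι → ℤ) : idot c 0 = 0 := by
  simp [idot]

lemma idot_neg {ι : Type*} [Fintype ι] (c a : ι → ℤ) : idot c (-a) = -idot c a := by
  simp [idot, Finset.sum_neg_distrib]

/-- The lattice `{ y ∈ ℤ^N : ⟨c,y⟩ ≡ 0 mod Q and ⟨d,y⟩ ≡ 0 mod Q }`. -/
def latQQ {N : ℕ} (c d : Fin N → ℤ) (Q : ℕ) : AddSubgroup (Fin N → ℤ) where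
  carrier := {y | (Q : ℤ) ∣ idot c y ∧ (Q : ℤ) ∣ idot d y}
  add_mem' := by
    intro a b ha hb
    exact ⟨by rw [idot_add]; exact dvd_add ha.1 hb.1,
           by rw [idot_add]; exact dvd_add ha.2 hb.2⟩
  zero_mem' := by
    exact ⟨by rw [idot_zero]; exact dvd_zero _, by rw [idot_zero]; exact dvd_zero _⟩
  neg_mem' := by
    intro a ha
    exact ⟨by rw [idot_neg]; exact ha.1.neg_right, by rw [idot_neg]; exact ha.2.neg_right⟩

/-- Bezout for a finset gcd over ℤ. -/
lemma finset_gcd_bezout {ι : Type*} [DecidableEq ι] (s : Finset ι) (f : ι → ℤ) :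
    ∃ a : ι → ℤ, ∑ i ∈ s, a i * f i = s.gcd f := by
  induction s using Finset.induction with
  | empty => exact ⟨0, by simp⟩
  | @insert x s hx ih =>
    obtain ⟨a, ha⟩ := ih
    refine ⟨fun j => if j = x then Int.gcdA (f x) (s.gcd f)
      else Int.gcdB (f x) (s.gcd f) * a j, ?_⟩
    rw [Finset.sum_insert hx, Finset.gcd_insert, ← Int.coe_gcd, Int.gcd_eq_gcd_ab]
    simp only [if_pos rfl]
    have : ∑ j ∈ s, (if j = x then Int.gcdA (f x) (s.gcd f)
        else Int.gcdB (f x) (s.gcd f) * a j) * f j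
        = Int.gcdB (f x) (s.gcd f) * ∑ j ∈ s, a j * f j := by
      rw [Finset.mul_sum]
      refine Finset.sum_congr rfl fun j hj => ?_
      rw [if_neg (fun hjx => hx (by rwa [hjx] at hj))]; ring
    rw [this, ha]; simp; ring

lemma idot_smul {ι : Type*} [Fintype ι] (c y : ι → ℤ) (r : ℤ) :
    idot c (r • y) = r * idot c y := by
  simp [idot, Finset.mul_sum]
  exact Finset.sum_congr rfl fun i _ => by ring

lemma idot_sub {ι : Type*} [Fintype ι] (c p q : ι → ℤ) :
    idot c (p - q) = idot c p - idot c q := by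
  rw [sub_eq_add_neg, idot_add, idot_neg]; ring

/-- The homomorphism whose kernel is `latQQ`. -/
def phiQ {N : ℕ} (c d : Fin N → ℤ) (Q : ℕ) : (Fin N → ℤ) →+ (ZMod Q × ZMod Q) where
  toFun y := ((idot c y : ZMod Q), (idot d y : ZMod Q))
  map_zero' := by simp [idot_zero]
  map_add' x y := by simp [idot_add, Prod.ext_iff]

/-- The homomorphism whose kernel is the range of `phiQ`. -/
def psiQ (Q g : ℕ) (hgQ : g ∣ Q) (b : ℤ) : (ZMod Q × ZMod Q) →+ ZMod g where
  toFun p := ZMod.castHom hgQ (ZMod g) p.2 - (b : ZMod g) * ZMod.castHom hgQ (ZMod g) p.1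
  map_zero' := by simp
  map_add' p q := by
    simp only [Prod.fst_add, Prod.snd_add, map_add]
    ring

/-- Let `N ≥ 2`, `Q ≥ 1`, and `c, d ∈ ℤ^N` linearly independent and
primitive. The full-rank lattice `{ y : ⟨c,y⟩ ≡ ⟨d,y⟩ ≡ 0 mod Q }` has determinant
(= index in `ℤ^N`) equal to `Q² / gcd(G(c,d), Q)`. -/
theorem stmt3 (N : ℕ) (hN : 2 ≤ N) (Q : ℕ) (hQ : 1 ≤ Q) (c d : Fin N → ℤ)
    (hc : Finset.gcd Finset.univ c = 1) (hd : Finset.gcd Finset.univ d = 1)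
    (h : LinearIndependent ℤ ![c, d]) :
    ((latQQ c d Q).index : ℤ) = (Q : ℤ) ^ 2 / (Int.gcd (minorGcd c d) (Q : ℤ) : ℤ) := by
  haveI : NeZero Q := ⟨by omega⟩
  set G : ℤ := minorGcd c d with hG
  set g : ℕ := Int.gcd G (Q : ℤ) with hg
  have hgQ : g ∣ Q := by
    have : (g : ℤ) ∣ ((Q : ℕ) : ℤ) := Int.gcd_dvd_right G (Q : ℤ)
    exact_mod_cast this
  have hgpos : 0 < g := by
    rcases Nat.eq_zero_or_pos g with h0 | h0
    · exfalso
      have h0' : Int.gcd G (Q : ℤ) = 0 := by rw [← hg]; exact h0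
      have : (Q : ℤ) = 0 := (Int.gcd_eq_zero_iff.mp h0').2
      omega
    · exact h0
  haveI : NeZero g := ⟨hgpos.ne'⟩
  -- Bezout data from primitivity of c
  obtain ⟨a, ha⟩ := finset_gcd_bezout Finset.univ c
  rw [hc] at ha
  set b : ℤ := ∑ i, a i * d i with hb
  have hca : idot c a = 1 := by
    rw [← ha]; exact Finset.sum_congr rfl fun i _ => mul_comm _ _
  have hda : idot d a = b := by
    rw [hb]; exact Finset.sum_congr rfl fun i _ => mul_comm _ _
  -- G divides each d i - b * c i
  have hGe : ∀ i, G ∣ d i - b * c i := by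
    intro i
    have key : d i - b * c i = ∑ j, a j * (c j * d i - c i * d j) := by
      have h1 : ∑ j, a j * (c j * d i - c i * d j)
          = (∑ j, a j * c j) * d i - c i * ∑ j, a j * d j := by
        rw [Finset.sum_mul, Finset.mul_sum, ← Finset.sum_sub_distrib]
        exact Finset.sum_congr rfl fun j _ => by ring
      rw [h1, ha, ← hb]; ring
    rw [key]
    refine Finset.dvd_sum fun j _ => Dvd.dvd.mul_left ?_ _
    exact Finset.gcd_dvd (Finset.mem_univ ((j, i) : Fin N × Fin N))
  set G' : ℤ := Finset.gcd Finset.univ (fun i => d i - b * c i) with hG'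
  obtain ⟨t, ht⟩ := finset_gcd_bezout Finset.univ (fun i => d i - b * c i)
  rw [← hG'] at ht
  have hGG' : G ∣ G' := Finset.dvd_gcd fun i _ => hGe i
  have hG'G : G' ∣ G := by
    rw [hG, minorGcd]
    refine Finset.dvd_gcd ?_
    rintro ⟨i, j⟩ -
    have key : c i * d j - c j * d i
        = c i * (d j - b * c j) - c j * (d i - b * c i) := by ring
    simp only [key]
    exact dvd_sub (Dvd.dvd.mul_left (Finset.gcd_dvd (Finset.mem_univ j)) _)
      (Dvd.dvd.mul_left (Finset.gcd_dvd (Finset.mem_univ i)) _)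
  have hgg' : Int.gcd G' (Q : ℤ) = g := by
    have hnat : G'.natAbs = G.natAbs :=
      Nat.dvd_antisymm (Int.natAbs_dvd_natAbs.mpr hG'G) (Int.natAbs_dvd_natAbs.mpr hGG')
    rw [hg, Int.gcd, Int.gcd, hnat]
  -- the two homomorphisms
  set φ := phiQ c d Q with hφ
  set ψ := psiQ Q g hgQ b with hψ
  have hpsi : ∀ u v : ℤ, ψ ((u : ZMod Q), (v : ZMod Q)) = ((v - b * u : ℤ) : ZMod g) := by
    intro u v
    simp only [hψ, psiQ, AddMonoidHom.coe_mk, ZeroHom.coe_mk, ZMod.castHom_apply,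
      ZMod.cast_intCast hgQ]
    push_cast
    ring
  have hphi : ∀ z, φ z = ((idot c z : ZMod Q), (idot d z : ZMod Q)) := fun z => rfl
  -- ker φ = latQQ
  have hker : latQQ c d Q = φ.ker := by
    ext y
    simp only [hφ, AddMonoidHom.mem_ker, hphi, Prod.ext_iff, Prod.fst_zero, Prod.snd_zero,
      ZMod.intCast_zmod_eq_zero_iff_dvd]
    constructor
    · intro hy; exact ⟨(ZMod.intCast_zmod_eq_zero_iff_dvd _ _).mpr hy.1,
        (ZMod.intCast_zmod_eq_zero_iff_dvd _ _).mpr hy.2⟩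
    · intro hy; exact ⟨(ZMod.intCast_zmod_eq_zero_iff_dvd _ _).mp hy.1,
        (ZMod.intCast_zmod_eq_zero_iff_dvd _ _).mp hy.2⟩
  -- range φ = ker ψ
  have hdvd0 : ∀ z : Fin N → ℤ, (g : ℤ) ∣ idot d z - b * idot c z := by
    intro z
    have hsum : idot d z - b * idot c z = ∑ i, (d i - b * c i) * z i := by
      simp only [idot, Finset.mul_sum, ← Finset.sum_sub_distrib]
      exact Finset.sum_congr rfl fun i _ => by ring
    rw [hsum]
    refine Finset.dvd_sum fun i _ => Dvd.dvd.mul_right ?_ _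
    have hgG' : (g : ℤ) ∣ G' := by rw [← hgg']; exact Int.gcd_dvd_left G' (Q : ℤ)
    exact hgG'.trans (Finset.gcd_dvd (Finset.mem_univ i))
  have hrange : φ.range = ψ.ker := by
    apply le_antisymm
    · rintro p ⟨z, rfl⟩
      rw [AddMonoidHom.mem_ker, hphi, hpsi, ZMod.intCast_zmod_eq_zero_iff_dvd]
      exact hdvd0 z
    · rintro ⟨px, py⟩ hp
      obtain ⟨x', rfl⟩ := ZMod.intCast_surjective px
      obtain ⟨y', rfl⟩ := ZMod.intCast_surjective py
      rw [AddMonoidHom.mem_ker, hpsi, ZMod.intCast_zmod_eq_zero_iff_dvd] at hp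
      obtain ⟨k, hk⟩ := hp
      have hbez : (g : ℤ) = G' * Int.gcdA G' (Q : ℤ) + (Q : ℤ) * Int.gcdB G' (Q : ℤ) := by
        rw [← hgg']; exact Int.gcd_eq_gcd_ab G' (Q : ℤ)
      set u : ℤ := Int.gcdA G' (Q : ℤ) * k with hu
      set v : ℤ := Int.gcdB G' (Q : ℤ) * k with hv
      have hk2 : y' - b * x' = G' * u + (Q : ℤ) * v := by
        rw [hk, hbez, hu, hv]; ring
      -- build a preimage
      set S : ℤ := idot c t with hS
      set w : Fin N → ℤ := t - S • a with hw
      have hcw : idot c w = 0 := by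
        rw [hw, idot_sub, idot_smul, hca, hS]; ring
      have hdw : idot d w = G' := by
        have hsum : idot d t - b * idot c t = G' := by
          rw [← ht]
          simp only [idot, Finset.mul_sum, ← Finset.sum_sub_distrib]
          exact Finset.sum_congr rfl fun i _ => by ring
        rw [hw, idot_sub, idot_smul, hda, hS]
        linarith [hsum]
      refine ⟨x' • a + u • w, ?_⟩
      rw [hphi, idot_add, idot_add, idot_smul, idot_smul, idot_smul, idot_smul,
        hca, hcw, hda, hdw]
      simp only [Prod.mk.injEq]
      constructor
      · push_cast; ring
      · rw [ZMod.intCast_eq_intCast_iff]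
        refine (Int.modEq_iff_dvd.mpr ⟨v, ?_⟩)
        linear_combination hk2
  -- ψ is surjective
  have hsurj : Function.Surjective ψ := by
    intro z
    obtain ⟨z', rfl⟩ := ZMod.intCast_surjective z
    refine ⟨(((0 : ℤ) : ZMod Q), ((z' : ℤ) : ZMod Q)), ?_⟩
    rw [hpsi]; push_cast; ring_nf
  -- counting
  have hψind : ψ.ker.index = g := by
    rw [AddSubgroup.index_ker, (AddMonoidHom.range_eq_top_of_surjective ψ hsurj)]
    rw [Nat.card_congr AddSubgroup.topEquiv.toEquiv, Nat.card_zmod]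
  have hcards : Nat.card ψ.ker * g = Q ^ 2 := by
    have := AddSubgroup.card_mul_index ψ.ker
    rw [hψind] at this
    rw [this, Nat.card_prod, Nat.card_zmod]; ring
  have hindex : (latQQ c d Q).index = Q ^ 2 / g := by
    rw [hker, AddSubgroup.index_ker, hrange, ← hcards, Nat.mul_div_cancel _ hgpos]
  rw [hindex, Int.natCast_div]
  push_cast
  ring_nf
end
end

section
/- Let n ≥ 1 and let x, y ∈ ℤ^{n+1} be two linearly independent vectors. Then the minimal determinant 𝔡₂(x,y) of a rank-2 sublattice of ℤ^{n+1} containing both x and y equals (‖x‖²‖y‖² − ⟨x,y⟩²)^{1/2} / G(x,y), where G(x,y) is the gcd of the 2×2 minors of the matrix with columns x and y. -/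
noncomputable section

/-- Euclidean norm of an integer vector. -/
def inorm {ι : Type*} [Fintype ι] (x : ι → ℤ) : ℝ := Real.sqrt (∑ i, (x i : ℝ) ^ 2)

/-- The determinant of the lattice with basis `v`: square root of the Gram determinant. -/
def latDet {ι κ : Type*} [Fintype ι] [Fintype κ] [DecidableEq κ] (v : κ → ι → ℤ) : ℝ :=
  Real.sqrt ((Matrix.det (Matrix.of fun i j => idot (v i) (v j)) : ℤ) : ℝ)

/-- The minimal determinant `𝔡_r(S)` of a rank-`r` sublattice of `ℤ^{n+1}` containing the
set `S`: the infimum of `sqrt (Gram det)` over bases `v` of rank-`r` sublattices whose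
span contains `S`. -/
def dmin (n r : ℕ) (S : Set (Fin (n + 1) → ℤ)) : ℝ :=
  sInf {t : ℝ | ∃ v : Fin r → (Fin (n + 1) → ℤ), LinearIndependent ℤ v ∧
    S ⊆ (Submodule.span ℤ (Set.range v) : Set (Fin (n + 1) → ℤ)) ∧ t = latDet v}

namespace Stmt5Aux

variable {ι : Type*} [Fintype ι]

lemma idot_comm (x y : ι → ℤ) : idot x y = idot y x := by
  simp only [idot, mul_comm]

lemma idot_comb_left (a b : ℤ) (u w z : ι → ℤ) :
    idot (a • u + b • w) z = a * idot u z + b * idot w z := by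
  simp only [idot, Pi.add_apply, Pi.smul_apply, smul_eq_mul, add_mul, Finset.sum_add_distrib,
    Finset.mul_sum, mul_assoc]

/-- 2×2 Gram determinant. -/
def gram2 (u w : ι → ℤ) : ℤ := idot u u * idot w w - idot u w * idot u w

lemma idot_comb_right (p q : ℤ) (u w z : ι → ℤ) :
    idot z (p • u + q • w) = p * idot z u + q * idot z w := by
  rw [idot_comm, idot_comb_left, idot_comm u z, idot_comm w z]

lemma gram2_comb (a b c d : ℤ) (u w : ι → ℤ) :
    gram2 (a • u + b • w) (c • u + d • w) = (a * d - b * c) ^ 2 * gram2 u w := by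
  unfold gram2
  simp only [idot_comb_left, idot_comb_right]
  rw [idot_comm w u]
  ring

lemma latDet_pair (v : Fin 2 → ι → ℤ) :
    latDet v = Real.sqrt ((gram2 (v 0) (v 1) : ℤ) : ℝ) := by
  have hdet : (Matrix.det (Matrix.of fun i j => idot (v i) (v j)) : ℤ) = gram2 (v 0) (v 1) := by
    rw [Matrix.det_fin_two]
    simp only [Matrix.of_apply]
    rw [gram2, idot_comm (v 1) (v 0)]
  rw [latDet, hdet]

lemma gram2_cast (u w : ι → ℤ) :
    ((gram2 u w : ℤ) : ℝ) =
      (∑ i, (u i : ℝ) ^ 2) * (∑ i, (w i : ℝ) ^ 2) - (∑ i, (u i : ℝ) * (w i : ℝ)) ^ 2 := by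
  simp only [gram2, idot, pow_two]
  push_cast
  ring

lemma gram2_cast_nonneg (u w : ι → ℤ) : (0 : ℝ) ≤ ((gram2 u w : ℤ) : ℝ) := by
  rw [gram2_cast]
  have := Finset.sum_mul_sq_le_sq_mul_sq Finset.univ (fun i => (u i : ℝ)) (fun i => (w i : ℝ))
  linarith

lemma minorGcd_nonneg (u w : ι → ℤ) : 0 ≤ minorGcd u w :=
  Int.nonneg_of_normalize_eq_self Finset.normalize_gcd

lemma minorGcd_comb (a b c d : ℤ) (u w : ι → ℤ) :
    minorGcd (a • u + b • w) (c • u + d • w) = |a * d - b * c| * minorGcd u w := by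
  rw [minorGcd, minorGcd, Int.abs_eq_normalize, ← Finset.gcd_mul_left]
  refine Finset.gcd_congr rfl fun p _ => ?_
  simp only [Pi.add_apply, Pi.smul_apply, smul_eq_mul]
  ring

lemma minorGcd_ne_zero {x y : ι → ℤ} (h : LinearIndependent ℤ ![x, y]) : minorGcd x y ≠ 0 := by
  rw [LinearIndependent.pair_iff] at h
  intro h0
  have hall : ∀ i j : ι, x i * y j - x j * y i = 0 := fun i j =>
    Finset.gcd_eq_zero_iff.mp h0 (i, j) (Finset.mem_univ _)
  have hy : y ≠ 0 := by
    intro hy0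
    have := h 0 1 (by simp [hy0])
    simpa using this.2
  obtain ⟨j, hj⟩ := Function.ne_iff.mp hy
  have hlin : (y j) • x + (-(x j)) • y = 0 := by
    funext i
    simp only [Pi.add_apply, Pi.smul_apply, smul_eq_mul, Pi.zero_apply]
    linear_combination hall i j
  exact hj (by simpa using (h (y j) (-(x j)) hlin).1)

lemma latDet_eq {n : ℕ} (x y : Fin (n + 1) → ℤ) (h : LinearIndependent ℤ ![x, y])
    (v : Fin 2 → Fin (n + 1) → ℤ)
    (hx : x ∈ Submodule.span ℤ ({v 0, v 1} : Set (Fin (n + 1) → ℤ)))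
    (hy : y ∈ Submodule.span ℤ ({v 0, v 1} : Set (Fin (n + 1) → ℤ))) :
    latDet v = Real.sqrt ((gram2 x y : ℤ) : ℝ) * ((minorGcd (v 0) (v 1) : ℤ) : ℝ) /
        ((minorGcd x y : ℤ) : ℝ) ∧ minorGcd (v 0) (v 1) ≠ 0 := by
  obtain ⟨a, b, hab⟩ := Submodule.mem_span_pair.mp hx
  obtain ⟨c, d, hcd⟩ := Submodule.mem_span_pair.mp hy
  set D := a * d - b * c with hD
  have hgram : gram2 x y = D ^ 2 * gram2 (v 0) (v 1) := by
    rw [← hab, ← hcd, gram2_comb]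
  have hG : minorGcd x y = |D| * minorGcd (v 0) (v 1) := by
    rw [← hab, ← hcd, minorGcd_comb]
  have hGxy := minorGcd_ne_zero h
  have hDne : D ≠ 0 := by
    intro h0
    exact hGxy (by rw [hG, h0, abs_zero, zero_mul])
  have hGv : minorGcd (v 0) (v 1) ≠ 0 := by
    intro h0
    exact hGxy (by rw [hG, h0, mul_zero])
  refine ⟨?_, hGv⟩
  rw [latDet_pair]
  have hsq : Real.sqrt ((gram2 x y : ℤ) : ℝ) =
      |(D : ℝ)| * Real.sqrt ((gram2 (v 0) (v 1) : ℤ) : ℝ) := by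
    rw [hgram]
    push_cast
    rw [Real.sqrt_mul (by positivity), Real.sqrt_sq_eq_abs]
  rw [hsq, hG]
  have hDr : |(D : ℝ)| ≠ 0 := by
    simpa using fun hh => hDne (by exact_mod_cast hh)
  have hGvr : ((minorGcd (v 0) (v 1) : ℤ) : ℝ) ≠ 0 := by exact_mod_cast hGv
  push_cast
  field_simp

lemma minorGcd_dvd_det (c₁ c₂ : ι → ℤ) (ψ₀ ψ₁ : (ι → ℤ) →ₗ[ℤ] ℤ) :
    minorGcd c₁ c₂ ∣ ψ₀ c₁ * ψ₁ c₂ - ψ₀ c₂ * ψ₁ c₁ := by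
  classical
  set E : ι → ι → ℤ := fun i j => if i = j then 1 else 0 with hE
  have e : ∀ (ψ : (ι → ℤ) →ₗ[ℤ] ℤ) (c : ι → ℤ), ψ c = ∑ i, c i * ψ (E i) := by
    intro ψ c
    simpa [smul_eq_mul, hE] using LinearMap.pi_apply_eq_sum_univ ψ c
  rw [e ψ₀ c₁, e ψ₀ c₂, e ψ₁ c₁, e ψ₁ c₂, Finset.sum_mul_sum, Finset.sum_mul_sum,
    ← Finset.sum_sub_distrib]
  refine Finset.dvd_sum fun i _ => ?_
  rw [← Finset.sum_sub_distrib]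
  refine Finset.dvd_sum fun j _ => ?_
  have hdvd : minorGcd c₁ c₂ ∣ c₁ i * c₂ j - c₁ j * c₂ i :=
    Finset.gcd_dvd (Finset.mem_univ (i, j))
  have hterm : c₁ i * ψ₀ (E i) * (c₂ j * ψ₁ (E j)) - c₂ i * ψ₀ (E i) * (c₁ j * ψ₁ (E j)) =
      (c₁ i * c₂ j - c₁ j * c₂ i) * (ψ₀ (E i) * ψ₁ (E j)) := by ring
  rw [hterm]
  exact hdvd.mul_right _

lemma range_pair (v : Fin 2 → ι → ℤ) : Set.range v = ({v 0, v 1} : Set (ι → ℤ)) := by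
  ext z
  simp [Fin.exists_fin_two, eq_comm]

end Stmt5Aux

open Stmt5Aux in
/-- For `n ≥ 1` and linearly independent `x, y ∈ ℤ^{n+1}`,
`𝔡₂(x,y) = sqrt(‖x‖²‖y‖² − ⟨x,y⟩²) / G(x,y)`. -/
theorem stmt5 (n : ℕ) (hn : 1 ≤ n) (x y : Fin (n + 1) → ℤ)
    (h : LinearIndependent ℤ ![x, y]) :
    dmin n 2 {x, y} =
      Real.sqrt (inorm x ^ 2 * inorm y ^ 2 - ((idot x y : ℤ) : ℝ) ^ 2) /
        ((minorGcd x y : ℤ) : ℝ) := by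
  classical
  have hGxy := minorGcd_ne_zero h
  have hGpos : (0 : ℝ) < ((minorGcd x y : ℤ) : ℝ) := by
    have h1 := minorGcd_nonneg x y
    exact_mod_cast lt_of_le_of_ne h1 (Ne.symm hGxy)
  set c : ℝ := Real.sqrt ((gram2 x y : ℤ) : ℝ) / ((minorGcd x y : ℤ) : ℝ) with hc
  have hcnonneg : 0 ≤ c := div_nonneg (Real.sqrt_nonneg _) hGpos.le
  have hmain : dmin n 2 ({x, y} : Set (Fin (n + 1) → ℤ)) = c := by
    apply IsLeast.csInf_eq
    constructor
    · -- membership : there is a lattice achieving the minimum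
      set N := Submodule.span ℤ ({x, y} : Set (Fin (n + 1) → ℤ)) with hN
      obtain ⟨m, bM, bN, f, av, hsnf⟩ := N.smithNormalForm (Pi.basisFun ℤ (Fin (n + 1)))
      have hxyrange : Set.range ![x, y] = ({x, y} : Set (Fin (n + 1) → ℤ)) := by
        ext z
        simp only [Set.mem_range, Fin.exists_fin_two, Set.mem_insert_iff, Set.mem_singleton_iff,
          Matrix.cons_val_zero, Matrix.cons_val_one, Matrix.head_cons, eq_comm]
      have bxy : Module.Basis (Fin 2) ℤ N :=
        (Module.Basis.span h).map (LinearEquiv.ofEq _ _ (by rw [hxyrange]))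
      have hm : m = 2 := by simpa using Fintype.card_congr (bN.indexEquiv bxy)
      subst hm
      set v : Fin 2 → Fin (n + 1) → ℤ := fun i => bM (f i) with hv
      have hvli : LinearIndependent ℤ v := bM.linearIndependent.comp f f.injective
      have hNle : N ≤ Submodule.span ℤ (Set.range v) := by
        intro z hz
        have hrep := bN.sum_repr ⟨z, hz⟩
        have hcoe : z = ∑ i, bN.repr ⟨z, hz⟩ i • ((bN i : Fin (n + 1) → ℤ)) := by
          have := congrArg (N.subtype) hrep
          rw [map_sum] at this
          simp only [map_smul, Submodule.subtype_apply] at this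
          exact this.symm
        rw [hcoe]
        refine Submodule.sum_mem _ fun i _ => Submodule.smul_mem _ _ ?_
        rw [hsnf i]
        exact Submodule.smul_mem _ _ (Submodule.subset_span ⟨i, rfl⟩)
      have hxN : x ∈ N := Submodule.subset_span (by simp)
      have hyN : y ∈ N := Submodule.subset_span (by simp)
      have hx' : x ∈ Submodule.span ℤ ({v 0, v 1} : Set (Fin (n + 1) → ℤ)) := by
        rw [← range_pair v]; exact hNle hxN
      have hy' : y ∈ Submodule.span ℤ ({v 0, v 1} : Set (Fin (n + 1) → ℤ)) := by
        rw [← range_pair v]; exact hNle hyN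
      have hGv1 : minorGcd (v 0) (v 1) = 1 := by
        have hd := minorGcd_dvd_det (v 0) (v 1) (bM.coord (f 0)) (bM.coord (f 1))
        have h00 : bM.coord (f 0) (v 0) = 1 := by
          simp [hv, Module.Basis.coord_apply, Module.Basis.repr_self_apply]
        have h01 : bM.coord (f 0) (v 1) = 0 := by
          simp [hv, Module.Basis.coord_apply, Module.Basis.repr_self_apply, f.injective.eq_iff]
        have h10 : bM.coord (f 1) (v 0) = 0 := by
          simp [hv, Module.Basis.coord_apply, Module.Basis.repr_self_apply, f.injective.eq_iff]
        have h11 : bM.coord (f 1) (v 1) = 1 := by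
          simp [hv, Module.Basis.coord_apply, Module.Basis.repr_self_apply]
        rw [h00, h01, h10, h11] at hd
        norm_num at hd
        have hunit := Int.isUnit_iff.mp (isUnit_of_dvd_one hd)
        have hnn := minorGcd_nonneg (v 0) (v 1)
        omega
      refine ⟨v, hvli, ?_, ?_⟩
      · intro z hz
        exact hNle (Submodule.subset_span hz)
      · obtain ⟨hld, -⟩ := latDet_eq x y h v hx' hy'
        rw [hld, hGv1, hc]
        norm_num
    · -- lower bound
      rintro t ⟨v, hvli, hvspan, rfl⟩
      have hx' : x ∈ Submodule.span ℤ ({v 0, v 1} : Set (Fin (n + 1) → ℤ)) := by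
        rw [← range_pair v]; exact hvspan (by simp)
      have hy' : y ∈ Submodule.span ℤ ({v 0, v 1} : Set (Fin (n + 1) → ℤ)) := by
        rw [← range_pair v]; exact hvspan (by simp)
      obtain ⟨hld, hGv⟩ := latDet_eq x y h v hx' hy'
      rw [hld]
      have hGv1 : (1 : ℝ) ≤ ((minorGcd (v 0) (v 1) : ℤ) : ℝ) := by
        have hnn := minorGcd_nonneg (v 0) (v 1)
        exact_mod_cast (by omega : (1 : ℤ) ≤ minorGcd (v 0) (v 1))
      calc c = c * 1 := (mul_one c).symm
        _ ≤ c * ((minorGcd (v 0) (v 1) : ℤ) : ℝ) :=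
            mul_le_mul_of_nonneg_left hGv1 hcnonneg
        _ = Real.sqrt ((gram2 x y : ℤ) : ℝ) * ((minorGcd (v 0) (v 1) : ℤ) : ℝ) /
            ((minorGcd x y : ℤ) : ℝ) := by
              rw [hc]; ring
  rw [hmain, hc]
  congr 2
  rw [gram2_cast, inorm, inorm, Real.sq_sqrt (by positivity), Real.sq_sqrt (by positivity)]
  congr 1
  rw [idot]
  push_cast
  ring
end
end

section
/- Let n ≥ 2 and r ∈ {1,…,n+1}. For any s₁,…,s_r ≥ 1, the number of primitive rank-r sublattices L ⊂ ℤ^{n+1} whose successive minima satisfy λ_j(L) ∈ (s_j/2, s_j] for all j equals O(s₁^{n+r} s₂^{n+r−2} ⋯ s_r^{n−r+2}), with implied constant depending only on n. -/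
noncomputable section

/-- The `i`-th successive minimum (w.r.t. the Euclidean unit ball) of `Λ ⊆ ℤ^ι`. -/
def succMin {ι : Type*} [Fintype ι] (Λ : Set (ι → ℤ)) (i : ℕ) : ℝ :=
  sInf {u : ℝ | 0 < u ∧ i ≤ Module.finrank ℝ (Submodule.span ℝ
    ((fun z : ι → ℤ => fun k => ((z k : ℝ))) '' {z ∈ Λ | inorm z ≤ u}))}

/-- A sublattice `L ⊆ ℤ^{n+1}` is primitive if `Span_ℝ(L) ∩ ℤ^{n+1} = L`. -/
def IsPrimitiveLattice {n : ℕ} (L : Submodule ℤ (Fin (n + 1) → ℤ)) : Prop :=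
  ∀ z : Fin (n + 1) → ℤ,
    ((fun k => ((z k : ℝ))) ∈ Submodule.span ℝ
      ((fun w : Fin (n + 1) → ℤ => fun k => ((w k : ℝ))) '' (L : Set (Fin (n + 1) → ℤ)))) →
    z ∈ L

namespace Stmt9

open Submodule Module Set

variable {ι : Type*} [Fintype ι]

def euc (ι : Type*) [Fintype ι] : (ι → ℤ) →ₗ[ℤ] EuclideanSpace ℝ ι where
  toFun z := (WithLp.equiv 2 _).symm (fun k => (z k : ℝ))
  map_add' x y := by ext k; exact (by push_cast; ring : ((x k + y k : ℤ) : ℝ) = (x k : ℝ) + (y k : ℝ))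
  map_smul' c x := by
    ext k
    show ((c * x k : ℤ) : ℝ) = c • ((x k : ℤ) : ℝ)
    rw [zsmul_eq_mul]
    push_cast
    ring

lemma euc_apply (z : ι → ℤ) (k : ι) : euc ι z k = (z k : ℝ) := rfl

lemma inorm_eq (z : ι → ℤ) : inorm z = ‖euc ι z‖ := by
  rw [EuclideanSpace.norm_eq, inorm]
  simp only [euc_apply, Real.norm_eq_abs, sq_abs]

lemma inorm_nonneg (z : ι → ℤ) : 0 ≤ inorm z := Real.sqrt_nonneg _

lemma inorm_add_le (x y : ι → ℤ) : inorm (x + y) ≤ inorm x + inorm y := by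
  rw [inorm_eq, inorm_eq, inorm_eq, map_add]; exact norm_add_le _ _

lemma inorm_zsmul (c : ℤ) (x : ι → ℤ) : inorm (c • x) = |(c : ℝ)| * inorm x := by
  rw [inorm_eq, inorm_eq, map_smul]
  rw [show (c • euc ι x) = (c : ℝ) • euc ι x from (Int.cast_smul_eq_zsmul ℝ c _).symm]
  rw [norm_smul, Real.norm_eq_abs]

lemma abs_coord_le (z : ι → ℤ) (k : ι) : |(z k : ℝ)| ≤ inorm z := by
  rw [inorm]
  have h1 : (z k : ℝ)^2 ≤ ∑ i, (z i : ℝ)^2 :=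
    Finset.single_le_sum (f := fun i => (z i : ℝ)^2) (fun i _ => sq_nonneg _) (Finset.mem_univ k)
  calc |(z k : ℝ)| = Real.sqrt ((z k : ℝ)^2) := (Real.sqrt_sq_eq_abs _).symm
  _ ≤ _ := Real.sqrt_le_sqrt h1

lemma one_le_inorm {z : ι → ℤ} (hz : z ≠ 0) : 1 ≤ inorm z := by
  obtain ⟨k, hk⟩ : ∃ k, z k ≠ 0 := by
    by_contra h; push_neg at h; exact hz (funext h)
  refine le_trans ?_ (abs_coord_le z k)
  have h1 : (1 : ℤ) ≤ |z k| := Int.one_le_abs hk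
  have h2 : (1:ℝ) ≤ ((|z k| : ℤ) : ℝ) := by exact_mod_cast h1
  rw [Int.cast_abs] at h2
  exact h2

lemma inorm_sum_le {α : Type*} (t : Finset α) (g : α → (ι → ℤ)) :
    inorm (∑ a ∈ t, g a) ≤ ∑ a ∈ t, inorm (g a) := by
  simp only [inorm_eq, map_sum]; exact norm_sum_le _ _

def fmap (n : ℕ) : (Fin (n+1) → ℤ) →ₗ[ℤ] (Fin (n+1) → ℝ) where
  toFun z := fun k => (z k : ℝ)
  map_add' x y := by funext k; show ((x k + y k : ℤ) : ℝ) = (x k : ℝ) + (y k : ℝ); push_cast; ring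
  map_smul' c x := by
    funext k
    show ((c * x k : ℤ) : ℝ) = c • ((x k : ℤ) : ℝ)
    rw [zsmul_eq_mul]; push_cast; ring

lemma fmap_coe (n : ℕ) : ⇑(fmap n) = (fun z : Fin (n+1) → ℤ => fun k => ((z k : ℝ))) := rfl

variable {n r : ℕ} {L : Submodule ℤ (Fin (n+1) → ℤ)}

open scoped Classical

/-- From the successive-minima hypotheses, dimension lower bounds at radius `2 t`. -/
lemma dim_ge (j : ℕ) {t : ℝ} (ht : 0 < t)
    (h1 : t / 2 < succMin (L : Set (Fin (n+1) → ℤ)) (j+1))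
    (h2 : succMin (L : Set (Fin (n+1) → ℤ)) (j+1) ≤ t) :
    j + 1 ≤ finrank ℝ (span ℝ (fmap n '' {z ∈ (L : Set (Fin (n+1) → ℤ)) | inorm z ≤ 2 * t})) := by
  rw [fmap_coe]
  set U : Set ℝ := {u : ℝ | 0 < u ∧ j + 1 ≤ finrank ℝ (span ℝ
    ((fun z : Fin (n+1) → ℤ => fun k => ((z k : ℝ))) '' {z ∈ (L : Set (Fin (n+1) → ℤ)) | inorm z ≤ u}))} with hU
  have hne : U.Nonempty := by
    by_contra hcon
    rw [Set.not_nonempty_iff_eq_empty] at hcon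
    have : succMin (L : Set (Fin (n+1) → ℤ)) (j+1) = 0 := by
      rw [succMin, ← hU, hcon, Real.sInf_empty]
    rw [this] at h1; linarith
  have hbdd : BddBelow U := ⟨0, fun u hu => hu.1.le⟩
  have hlt : sInf U < 2 * t := by
    have : sInf U ≤ t := by rw [succMin, ← hU] at h2; exact h2
    linarith
  obtain ⟨u, huU, hut⟩ := (csInf_lt_iff hbdd hne).mp hlt
  refine le_trans huU.2 (Submodule.finrank_mono (span_mono (Set.image_mono ?_)))
  intro z hz
  exact ⟨hz.1, le_trans hz.2 hut.le⟩

/-- Construction of linearly independent short vectors. -/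
lemma exists_w (r : ℕ) (s' : ℕ → ℝ)
    (hdim : ∀ j < r, j + 1 ≤ finrank ℝ (span ℝ (fmap n '' {z ∈ (L : Set (Fin (n+1) → ℤ)) | inorm z ≤ 2 * s' j}))) :
    ∃ w : Fin r → (Fin (n+1) → ℤ), (∀ i, w i ∈ L) ∧ (∀ i, inorm (w i) ≤ 2 * s' i.val) ∧
      LinearIndependent ℝ (⇑(fmap n) ∘ w) := by
  suffices h : ∀ m ≤ r, ∃ w : Fin m → (Fin (n+1) → ℤ), (∀ i, w i ∈ L) ∧
      (∀ i, inorm (w i) ≤ 2 * s' i.val) ∧ LinearIndependent ℝ (⇑(fmap n) ∘ w) from h r le_rfl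
  intro m
  induction m with
  | zero => exact fun _ => ⟨fun i => 0, fun i => i.elim0, fun i => i.elim0, linearIndependent_empty_type⟩
  | succ m ih =>
    intro hm
    obtain ⟨w, hwL, hws, hwli⟩ := ih (le_trans (Nat.le_succ m) hm)
    have hd := hdim m hm
    have hcard : finrank ℝ (span ℝ (Set.range (⇑(fmap n) ∘ w))) = m := by
      rw [finrank_span_eq_card hwli, Fintype.card_fin]
    have hnotle : ¬ (span ℝ (fmap n '' {z ∈ (L : Set (Fin (n+1) → ℤ)) | inorm z ≤ 2 * s' m})
        ≤ span ℝ (Set.range (⇑(fmap n) ∘ w))) := by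
      intro hle
      have := Submodule.finrank_mono hle
      omega
    have hexists : ∃ x ∈ fmap n '' {z ∈ (L : Set (Fin (n+1) → ℤ)) | inorm z ≤ 2 * s' m},
        x ∉ span ℝ (Set.range (⇑(fmap n) ∘ w)) := by
      by_contra hcon
      push_neg at hcon
      exact hnotle (span_le.mpr hcon)
    obtain ⟨x, hx, hxs⟩ := hexists
    obtain ⟨z, hz, rfl⟩ := hx
    refine ⟨Fin.snoc w z, ?_, ?_, ?_⟩
    · intro i
      refine Fin.lastCases ?_ ?_ i
      · rw [Fin.snoc_last]; exact hz.1
      · intro i'; rw [Fin.snoc_castSucc]; exact hwL i'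
    · intro i
      refine Fin.lastCases ?_ ?_ i
      · rw [Fin.snoc_last]; exact hz.2
      · intro i'; rw [Fin.snoc_castSucc]; exact hws i'
    · have : ⇑(fmap n) ∘ (Fin.snoc w z) = Fin.snoc (⇑(fmap n) ∘ w) (fmap n z) := by
        funext i
        refine Fin.lastCases ?_ ?_ i
        · simp [Fin.snoc_last]
        · intro i'; simp [Fin.snoc_castSucc]
      rw [this, linearIndependent_fin_snoc]
      exact ⟨hwli, hxs⟩

lemma finrank_span_image_le (hL : finrank ℤ ↥L = r) :
    finrank ℝ (span ℝ (fmap n '' (L : Set (Fin (n+1) → ℤ)))) ≤ r := by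
  have : Module.Finite ℤ ↥L := inferInstance
  have : Module.Free ℤ ↥L := inferInstance
  let b := Module.finBasis ℤ ↥L
  rw [hL] at b
  have hsub : fmap n '' (L : Set (Fin (n+1) → ℤ)) ⊆
      span ℝ (Set.range (fun i : Fin r => fmap n ((b i : Fin (n+1) → ℤ)))) := by
    rintro - ⟨z, hz, rfl⟩
    have hrepr : (⟨z, hz⟩ : ↥L) = ∑ i, (b.repr ⟨z, hz⟩ i) • b i := (b.sum_repr ⟨z, hz⟩).symm
    have hz2 : z = ∑ i, (b.repr ⟨z, hz⟩ i) • ((b i : Fin (n+1) → ℤ)) := by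
      have := congrArg (Subtype.val) hrepr
      simpa only [Submodule.coe_sum, Submodule.coe_smul] using this
    rw [hz2]
    rw [map_sum]
    refine Submodule.sum_mem _ (fun i _ => ?_)
    rw [map_smul]
    exact zsmul_mem (subset_span (Set.mem_range_self i)) _
  refine le_trans (Submodule.finrank_mono (span_le.mpr hsub)) ?_
  refine le_trans (finrank_span_le_card _) ?_
  calc (Set.range fun i : Fin r => fmap n (b i : Fin (n+1) → ℤ)).toFinset.card
      ≤ Fintype.card (Fin r) := by
        rw [Set.toFinset_range]; exact Finset.card_image_le.trans (by simp)
    _ = r := Fintype.card_fin r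

/-- A tuple of `r` vectors in `L` whose images span dimension `≥ r` determines `L`. -/
lemma determines (hL : finrank ℤ ↥L = r) (hprim : IsPrimitiveLattice L)
    (u : Fin r → (Fin (n+1) → ℤ)) (hu : ∀ j, u j ∈ L)
    (hrank : r ≤ finrank ℝ (span ℝ (Set.range (⇑(fmap n) ∘ u)))) :
    L = Submodule.comap (fmap n)
      ((span ℝ (Set.range (⇑(fmap n) ∘ u))).restrictScalars ℤ) := by
  have hle : span ℝ (Set.range (⇑(fmap n) ∘ u)) ≤ span ℝ (fmap n '' (L : Set (Fin (n+1) → ℤ))) := by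
    refine span_le.mpr ?_
    rintro - ⟨j, rfl⟩
    exact subset_span (Set.mem_image_of_mem _ (hu j))
  have heq : span ℝ (Set.range (⇑(fmap n) ∘ u)) = span ℝ (fmap n '' (L : Set (Fin (n+1) → ℤ))) := by
    refine Submodule.eq_of_le_of_finrank_le hle ?_
    exact le_trans (finrank_span_image_le hL) hrank
  ext z
  constructor
  · intro hz
    simp only [Submodule.mem_comap, Submodule.restrictScalars_mem]
    rw [heq]
    exact subset_span (Set.mem_image_of_mem _ hz)
  · intro hz
    simp only [Submodule.mem_comap, Submodule.restrictScalars_mem] at hz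
    rw [heq] at hz
    exact hprim z hz

lemma card_tup_ge (hr : 1 ≤ r) (s' : ℕ → ℝ) (hs1 : ∀ m, 1 ≤ s' m)
    (w : Fin r → (Fin (n+1) → ℤ)) (hwL : ∀ i, w i ∈ L)
    (hws : ∀ i, inorm (w i) ≤ 2 * s' i.val)
    (hwli : LinearIndependent ℝ (⇑(fmap n) ∘ w))
    (T' : Finset (Fin r → (Fin (n+1) → ℤ)))
    (hT' : ∀ u : Fin r → (Fin (n+1) → ℤ), (∀ j, inorm (u j) ≤ 3 * s' j.val) → u ∈ T') :
    (∏ j : Fin r, ∏ i : Fin j.val, (s' j.val / (2 * (r : ℝ) * s' i.val)))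
      ≤ ((T'.filter (fun u => (∀ j, u j ∈ L) ∧
          r ≤ finrank ℝ (span ℝ (Set.range (⇑(fmap n) ∘ u))))).card : ℝ) := by
  classical
  have hs0 : ∀ m, (0:ℝ) < s' m := fun m => lt_of_lt_of_le one_pos (hs1 m)
  have hw0 : ∀ i : Fin r, (1:ℝ) ≤ inorm (w i) := by
    intro i
    apply one_le_inorm
    intro hzero
    exact hwli.ne_zero i (by simp [Function.comp, hzero, map_zero])
  have hwpos : ∀ i : Fin r, (0:ℝ) < inorm (w i) := fun i => lt_of_lt_of_le one_pos (hw0 i)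
  have emb : ∀ (j : Fin r) (i : Fin j.val), i.val < r := fun j i => lt_trans i.2 j.2
  set A : (j : Fin r) → Fin j.val → ℕ :=
    fun j i => ⌊ s' j.val / ((r : ℝ) * inorm (w ⟨i.val, emb j i⟩)) ⌋₊ with hA
  set Φ : ((j : Fin r) → Fin j.val → ℕ) → (Fin r → (Fin (n+1) → ℤ)) :=
    fun a j => w j + ∑ i : Fin j.val, ((a j i : ℤ)) • w ⟨i.val, emb j i⟩ with hΦ
  set D : Finset ((j : Fin r) → Fin j.val → ℕ) :=
    Fintype.piFinset (fun j => Fintype.piFinset (fun i => Finset.range (A j i + 1))) with hD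
  have hmemD : ∀ a ∈ D, ∀ j (i : Fin j.val), a j i ≤ A j i := by
    intro a ha j i
    rw [hD, Fintype.mem_piFinset] at ha
    have := (Fintype.mem_piFinset.mp (ha j)) i
    rw [Finset.mem_range] at this
    omega
  have hterm : ∀ a ∈ D, ∀ (j : Fin r) (i : Fin j.val),
      ((a j i : ℝ)) * inorm (w ⟨i.val, emb j i⟩) ≤ s' j.val / r := by
    intro a ha j i
    have h1 : ((a j i : ℝ)) ≤ (A j i : ℝ) := by exact_mod_cast hmemD a ha j i
    have h2 : (A j i : ℝ) ≤ s' j.val / ((r : ℝ) * inorm (w ⟨i.val, emb j i⟩)) := by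
      rw [hA]
      have hrpos : (0:ℝ) < (r:ℝ) := by exact_mod_cast hr
      exact Nat.floor_le (le_of_lt (div_pos (hs0 _) (mul_pos hrpos (hwpos _))))
    have h3 : ((a j i : ℝ)) * inorm (w ⟨i.val, emb j i⟩)
        ≤ (s' j.val / ((r : ℝ) * inorm (w ⟨i.val, emb j i⟩))) * inorm (w ⟨i.val, emb j i⟩) := by
      apply mul_le_mul_of_nonneg_right (le_trans h1 h2) (inorm_nonneg _)
    refine le_trans h3 ?_
    rw [div_mul_eq_mul_div, mul_comm (r:ℝ) _, ← div_div, mul_div_assoc]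
    rw [div_self (ne_of_gt (hwpos _)), mul_one]
  have hnorm : ∀ a ∈ D, ∀ j, inorm (Φ a j) ≤ 3 * s' j.val := by
    intro a ha j
    rw [hΦ]
    refine le_trans (inorm_add_le _ _) ?_
    have h1 : inorm (∑ i : Fin j.val, ((a j i : ℤ)) • w ⟨i.val, emb j i⟩)
        ≤ ∑ i : Fin j.val, ((a j i : ℝ)) * inorm (w ⟨i.val, emb j i⟩) := by
      refine le_trans (inorm_sum_le _ _) ?_
      apply Finset.sum_le_sum
      intro i _
      rw [inorm_zsmul]
      simp only [Int.cast_natCast]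
      rw [abs_of_nonneg (by positivity : (0:ℝ) ≤ (a j i : ℝ))]
    have h2 : ∑ i : Fin j.val, ((a j i : ℝ)) * inorm (w ⟨i.val, emb j i⟩)
        ≤ ∑ _i : Fin j.val, s' j.val / r :=
      Finset.sum_le_sum (fun i _ => hterm a ha j i)
    have h3 : ∑ _i : Fin j.val, s' j.val / (r:ℝ) = j.val * (s' j.val / r) := by
      rw [Finset.sum_const, Finset.card_univ, Fintype.card_fin, nsmul_eq_mul]
    have hrpos : (0:ℝ) < (r:ℝ) := by exact_mod_cast hr
    have h4 : (j.val : ℝ) * (s' j.val / r) ≤ s' j.val := by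
      have hjr : (j.val : ℝ) ≤ (r : ℝ) := by exact_mod_cast (le_of_lt j.2)
      have h5 : (j.val : ℝ) * (s' j.val / r) ≤ (r:ℝ) * (s' j.val / r) :=
        mul_le_mul_of_nonneg_right hjr (le_of_lt (div_pos (hs0 _) hrpos))
      have h6 : (r:ℝ) * (s' j.val / r) = s' j.val := by
        field_simp
      linarith
    have := hws j
    linarith
  have hmemL : ∀ a (j : Fin r), Φ a j ∈ L := by
    intro a j
    exact Submodule.add_mem _ (hwL j)
      (Submodule.sum_mem _ (fun i _ => Submodule.smul_mem _ _ (hwL _)))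
  have hrank : ∀ a, (r : ℕ) ≤ finrank ℝ (span ℝ (Set.range (⇑(fmap n) ∘ Φ a))) := by
    intro a
    have key : ∀ m, ∀ (hm : m < r), fmap n (w ⟨m, hm⟩) ∈ span ℝ (Set.range (⇑(fmap n) ∘ Φ a)) := by
      intro m
      induction m using Nat.strong_induction_on with
      | _ m IH =>
        intro hm
        have heq : fmap n (w ⟨m, hm⟩) = fmap n (Φ a ⟨m, hm⟩)
            - ∑ i : Fin m, ((a ⟨m, hm⟩ i : ℤ)) • fmap n (w ⟨i.val, emb ⟨m,hm⟩ i⟩) := by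
          rw [hΦ]
          simp only [map_add, map_sum, map_smul]
          abel
        rw [heq]
        refine Submodule.sub_mem _ (subset_span ⟨⟨m, hm⟩, rfl⟩) ?_
        refine Submodule.sum_mem _ (fun i _ => zsmul_mem ?_ _)
        exact IH i.val i.2 _
    have hsub : span ℝ (Set.range (⇑(fmap n) ∘ w)) ≤ span ℝ (Set.range (⇑(fmap n) ∘ Φ a)) := by
      refine span_le.mpr ?_
      rintro - ⟨j, rfl⟩
      exact key j.val j.2
    calc (r:ℕ) = finrank ℝ (span ℝ (Set.range (⇑(fmap n) ∘ w))) := by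
          rw [finrank_span_eq_card hwli, Fintype.card_fin]
      _ ≤ _ := Submodule.finrank_mono hsub
  have hZli : LinearIndependent ℤ (⇑(fmap n) ∘ w) := by
    refine hwli.restrict_scalars ?_
    intro c c' h
    simpa [zsmul_eq_mul] using h
  have hinj : Set.InjOn Φ (D : Set _) := by
    intro a ha a' ha' h
    funext j i
    have hj := congrFun h j
    rw [hΦ] at hj
    simp only at hj
    have hsum : ∑ i : Fin j.val, (((a j i : ℤ)) - ((a' j i : ℤ))) • w ⟨i.val, emb j i⟩ = 0 := by
      simp only [sub_smul, Finset.sum_sub_distrib]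
      have := add_left_cancel hj
      rw [this]; abel
    have hli : LinearIndependent ℤ (fun i : Fin j.val => fmap n (w ⟨i.val, emb j i⟩)) := by
      have : (fun i : Fin j.val => fmap n (w ⟨i.val, emb j i⟩))
          = (⇑(fmap n) ∘ w) ∘ (fun i : Fin j.val => (⟨i.val, emb j i⟩ : Fin r)) := rfl
      rw [this]
      refine hZli.comp _ ?_
      intro x y hxy
      simp only [Fin.mk.injEq] at hxy
      exact Fin.ext hxy
    have happ := congrArg (fmap n) hsum
    rw [map_sum, map_zero] at happ
    simp only [map_smul] at happ
    have := Fintype.linearIndependent_iff.mp hli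
      (fun i => ((a j i : ℤ)) - ((a' j i : ℤ))) happ i
    omega
  have hcardD : ((D.card : ℝ)) = ∏ j : Fin r, ∏ i : Fin j.val, ((A j i : ℝ) + 1) := by
    rw [hD, Fintype.card_piFinset]
    push_cast
    refine Finset.prod_congr rfl (fun j _ => ?_)
    rw [Fintype.card_piFinset]
    push_cast
    refine Finset.prod_congr rfl (fun i _ => ?_)
    rw [Finset.card_range]
    push_cast
    ring
  have hmap : ∀ a ∈ D, Φ a ∈ T'.filter (fun u => (∀ j, u j ∈ L) ∧
      r ≤ finrank ℝ (span ℝ (Set.range (⇑(fmap n) ∘ u)))) := by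
    intro a ha
    rw [Finset.mem_filter]
    exact ⟨hT' _ (hnorm a ha), fun j => hmemL a j, hrank a⟩
  have hcard : D.card ≤ (T'.filter (fun u => (∀ j, u j ∈ L) ∧
      r ≤ finrank ℝ (span ℝ (Set.range (⇑(fmap n) ∘ u))))).card :=
    Finset.card_le_card_of_injOn Φ hmap hinj
  have hAterm : ∀ (j : Fin r) (i : Fin j.val),
      s' j.val / (2 * (r:ℝ) * s' i.val) ≤ (A j i : ℝ) + 1 := by
    intro j i
    have hrpos : (0:ℝ) < (r:ℝ) := by exact_mod_cast hr
    have h1 : s' j.val / ((r : ℝ) * inorm (w ⟨i.val, emb j i⟩)) < (A j i : ℝ) + 1 := by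
      have h0 := Nat.lt_floor_add_one (s' j.val / ((r : ℝ) * inorm (w ⟨i.val, emb j i⟩)))
      rw [hA]
      push_cast
      exact h0
    refine le_trans ?_ h1.le
    have hle : (r:ℝ) * inorm (w ⟨i.val, emb j i⟩) ≤ 2 * (r:ℝ) * s' i.val := by
      calc (r:ℝ) * inorm (w ⟨i.val, emb j i⟩) ≤ (r:ℝ) * (2 * s' i.val) :=
            mul_le_mul_of_nonneg_left (hws ⟨i.val, emb j i⟩) hrpos.le
        _ = 2 * (r:ℝ) * s' i.val := by ring
    exact div_le_div_of_nonneg_left (hs0 _).le (mul_pos hrpos (hwpos _)) hle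
  calc (∏ j : Fin r, ∏ i : Fin j.val, (s' j.val / (2 * (r : ℝ) * s' i.val)))
      ≤ ∏ j : Fin r, ∏ i : Fin j.val, ((A j i : ℝ) + 1) := by
        have hrpos : (0:ℝ) < (r:ℝ) := by exact_mod_cast hr
        have hnn : ∀ (j : Fin r) (i : Fin j.val), (0:ℝ) ≤ s' j.val / (2 * (r:ℝ) * s' i.val) :=
          fun j i => le_of_lt (div_pos (hs0 _) (mul_pos (mul_pos two_pos hrpos) (hs0 _)))
        apply Finset.prod_le_prod
        · intro j _; exact Finset.prod_nonneg (fun i _ => hnn j i)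
        · intro j _
          apply Finset.prod_le_prod
          · intro i _; exact hnn j i
          · intro i _; exact hAterm j i
    _ = (D.card : ℝ) := hcardD.symm
    _ ≤ _ := Nat.cast_le.mpr hcard

lemma prod_tri_lower (t : ℕ → ℝ) (m : ℕ) :
    ∏ j ∈ Finset.range m, ∏ i ∈ Finset.range j, t i
      = ∏ i ∈ Finset.range m, t i ^ (m - 1 - i) := by
  induction m with
  | zero => simp
  | succ m ih =>
    rw [Finset.prod_range_succ, ih]
    have h1 : ∏ i ∈ Finset.range (m+1), t i ^ (m + 1 - 1 - i)
        = (∏ i ∈ Finset.range m, t i ^ (m - i)) * t m ^ (m - m) := by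
      rw [Finset.prod_range_succ]
      simp only [Nat.add_sub_cancel]
    rw [h1, Nat.sub_self, pow_zero, mul_one, ← Finset.prod_mul_distrib]
    apply Finset.prod_congr rfl
    intro i hi
    rw [Finset.mem_range] at hi
    rw [← pow_succ]
    congr 1
    omega

lemma final_arith (n r : ℕ) (hr : 1 ≤ r) (hrn : r ≤ n + 1) (s' : ℕ → ℝ)
    (hs1 : ∀ m, 1 ≤ s' m) (x : ℝ)
    (hmain : x * (∏ j ∈ Finset.range r, ∏ i ∈ Finset.range j, (s' j / (2 * (r:ℝ) * s' i)))
      ≤ ∏ j ∈ Finset.range r, (7 * s' j) ^ (n+1)) :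
    x ≤ (7:ℝ)^((n+1)*(n+2)) * (2*(n:ℝ)+2)^((n+1)*(n+1))
        * ∏ j ∈ Finset.range r, s' j ^ (n + r - 2*j) := by
  have hs0 : ∀ m, (0:ℝ) < s' m := fun m => lt_of_lt_of_le one_pos (hs1 m)
  have hrpos : (0:ℝ) < (r:ℝ) := by exact_mod_cast hr
  have h2r : (0:ℝ) < 2*(r:ℝ) := by linarith
  have hinner : ∀ j, ∏ i ∈ Finset.range j, (s' j / (2 * (r:ℝ) * s' i))
      = s' j ^ j / ((2*(r:ℝ))^j * ∏ i ∈ Finset.range j, s' i) := by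
    intro j
    rw [Finset.prod_div_distrib, Finset.prod_const, Finset.card_range]
    congr 1
    rw [Finset.prod_mul_distrib, Finset.prod_const, Finset.card_range]
  have hB : ∀ j, (0:ℝ) < ∏ i ∈ Finset.range j, s' i :=
    fun j => Finset.prod_pos (fun i _ => hs0 i)
  set K : ℕ := ∑ j ∈ Finset.range r, j with hK
  have hposF : (0:ℝ) < (2*(r:ℝ))^K * ∏ i ∈ Finset.range r, s' i ^ (r - 1 - i) :=
    mul_pos (pow_pos h2r K) (Finset.prod_pos (fun i _ => pow_pos (hs0 i) _))
  have hkey : (∏ j ∈ Finset.range r, ∏ i ∈ Finset.range j, (s' j / (2 * (r:ℝ) * s' i)))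
      * ((2*(r:ℝ))^K * ∏ i ∈ Finset.range r, s' i ^ (r - 1 - i))
      = ∏ j ∈ Finset.range r, s' j ^ j := by
    have h1 : ∏ j ∈ Finset.range r, ∏ i ∈ Finset.range j, (s' j / (2 * (r:ℝ) * s' i))
        = (∏ j ∈ Finset.range r, s' j ^ j)
          / ((2*(r:ℝ))^K * ∏ i ∈ Finset.range r, s' i ^ (r - 1 - i)) := by
      rw [Finset.prod_congr rfl (fun j _ => hinner j), Finset.prod_div_distrib]
      congr 1
      rw [Finset.prod_mul_distrib, ← prod_tri_lower s' r]
      congr 1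
      rw [hK, Finset.prod_pow_eq_pow_sum]
    rw [h1, div_mul_cancel₀]
    exact hposF.ne'
  have h2 : x * (∏ j ∈ Finset.range r, s' j ^ j)
      ≤ (∏ j ∈ Finset.range r, (7 * s' j) ^ (n+1))
        * ((2*(r:ℝ))^K * ∏ i ∈ Finset.range r, s' i ^ (r - 1 - i)) := by
    calc x * (∏ j ∈ Finset.range r, s' j ^ j)
        = (x * ∏ j ∈ Finset.range r, ∏ i ∈ Finset.range j, (s' j / (2 * (r:ℝ) * s' i)))
          * ((2*(r:ℝ))^K * ∏ i ∈ Finset.range r, s' i ^ (r - 1 - i)) := by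
          rw [mul_assoc, hkey]
      _ ≤ _ := mul_le_mul_of_nonneg_right hmain hposF.le
  have hconst : (7:ℝ)^(r*(n+1)) * (2*(r:ℝ))^K
      ≤ (7:ℝ)^((n+1)*(n+2)) * (2*(n:ℝ)+2)^((n+1)*(n+1)) := by
    have e1 : (7:ℝ)^(r*(n+1)) ≤ (7:ℝ)^((n+1)*(n+2)) := by
      apply pow_le_pow_right₀ (by norm_num)
      nlinarith
    have e2 : (2*(r:ℝ))^K ≤ (2*(n:ℝ)+2)^((n+1)*(n+1)) := by
      have hb : (2*(r:ℝ)) ≤ 2*(n:ℝ)+2 := by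
        have : (r:ℝ) ≤ (n:ℝ)+1 := by exact_mod_cast hrn
        linarith
      have hKle : K ≤ (n+1)*(n+1) := by
        rw [hK]
        calc ∑ j ∈ Finset.range r, j ≤ ∑ _j ∈ Finset.range r, r :=
              Finset.sum_le_sum (fun j hj => le_of_lt (Finset.mem_range.mp hj))
          _ = r * r := by rw [Finset.sum_const, Finset.card_range, smul_eq_mul]
          _ ≤ (n+1)*(n+1) := Nat.mul_le_mul hrn hrn
      calc (2*(r:ℝ))^K ≤ (2*(n:ℝ)+2)^K := pow_le_pow_left₀ h2r.le hb K
        _ ≤ (2*(n:ℝ)+2)^((n+1)*(n+1)) := by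
            apply pow_le_pow_right₀ (by linarith [Nat.cast_nonneg (α := ℝ) n]) hKle
    calc (7:ℝ)^(r*(n+1)) * (2*(r:ℝ))^K ≤ (7:ℝ)^((n+1)*(n+2)) * (2*(r:ℝ))^K :=
          mul_le_mul_of_nonneg_right e1 (by positivity)
      _ ≤ _ := mul_le_mul_of_nonneg_left e2 (by positivity)
  have hseven : ∏ j ∈ Finset.range r, (7 * s' j) ^ (n+1)
      = (7:ℝ)^(r*(n+1)) * ∏ j ∈ Finset.range r, s' j ^ (n+1) := by
    simp only [mul_pow]
    rw [Finset.prod_mul_distrib, Finset.prod_const, Finset.card_range, ← pow_mul,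
      Nat.mul_comm]
  have hexp : (∏ j ∈ Finset.range r, s' j ^ (n+1)) * (∏ i ∈ Finset.range r, s' i ^ (r - 1 - i))
      = (∏ j ∈ Finset.range r, s' j ^ (n + r - 2*j)) * (∏ j ∈ Finset.range r, s' j ^ j) := by
    rw [← Finset.prod_mul_distrib, ← Finset.prod_mul_distrib]
    apply Finset.prod_congr rfl
    intro j hj
    rw [Finset.mem_range] at hj
    rw [← pow_add, ← pow_add]
    congr 1
    omega
  have hQ : (0:ℝ) < ∏ j ∈ Finset.range r, s' j ^ j :=
    Finset.prod_pos (fun j _ => pow_pos (hs0 j) j)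
  have h3 : x * (∏ j ∈ Finset.range r, s' j ^ j)
      ≤ ((7:ℝ)^((n+1)*(n+2)) * (2*(n:ℝ)+2)^((n+1)*(n+1))
          * ∏ j ∈ Finset.range r, s' j ^ (n + r - 2*j)) * (∏ j ∈ Finset.range r, s' j ^ j) := by
    refine le_trans h2 ?_
    rw [hseven]
    calc (7:ℝ)^(r*(n+1)) * (∏ j ∈ Finset.range r, s' j ^ (n+1))
          * ((2*(r:ℝ))^K * ∏ i ∈ Finset.range r, s' i ^ (r - 1 - i))
        = ((7:ℝ)^(r*(n+1)) * (2*(r:ℝ))^K)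
          * ((∏ j ∈ Finset.range r, s' j ^ (n+1)) * ∏ i ∈ Finset.range r, s' i ^ (r - 1 - i)) := by
          ring
      _ ≤ ((7:ℝ)^((n+1)*(n+2)) * (2*(n:ℝ)+2)^((n+1)*(n+1)))
          * ((∏ j ∈ Finset.range r, s' j ^ (n+1)) * ∏ i ∈ Finset.range r, s' i ^ (r - 1 - i)) := by
          apply mul_le_mul_of_nonneg_right hconst
          exact mul_nonneg (Finset.prod_nonneg (fun j _ => pow_nonneg (hs0 j).le _))
            (Finset.prod_nonneg (fun i _ => pow_nonneg (hs0 i).le _))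
      _ = _ := by rw [hexp]; ring
  exact le_of_mul_le_mul_right h3 hQ

end Stmt9
open Stmt9 Submodule Module

/-- Let `n ≥ 2` and `r ∈ {1,…,n+1}`. For any `s₁,…,s_r ≥ 1`, the number
of primitive rank-`r` sublattices `L ⊆ ℤ^{n+1}` with `λ_j(L) ∈ (s_j/2, s_j]` for all `j`
is `O(s₁^{n+r} s₂^{n+r−2} ⋯ s_r^{n−r+2})`, with implied constant depending only on `n`. -/
theorem stmt9 (n : ℕ) (hn : 2 ≤ n) :
    ∃ C : ℝ, 0 < C ∧ ∀ r : ℕ, 1 ≤ r → r ≤ n + 1 → ∀ s : Fin r → ℝ, (∀ j, 1 ≤ s j) →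
      (let S : Set (Submodule ℤ (Fin (n + 1) → ℤ)) :=
        {L | Module.finrank ℤ ↥L = r ∧ IsPrimitiveLattice L ∧
          ∀ j : Fin r, s j / 2 < succMin (L : Set (Fin (n + 1) → ℤ)) ((j : ℕ) + 1) ∧
            succMin (L : Set (Fin (n + 1) → ℤ)) ((j : ℕ) + 1) ≤ s j}
      S.Finite ∧ (S.ncard : ℝ) ≤ C * ∏ j : Fin r, s j ^ (n + r - 2 * (j : ℕ))) := by
  classical
  refine ⟨(7:ℝ)^((n+1)*(n+2)) * (2*(n:ℝ)+2)^((n+1)*(n+1)), by positivity, ?_⟩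
  intro r hr hrn s hs
  intro S
  have hSdef : S = {L : Submodule ℤ (Fin (n + 1) → ℤ) | Module.finrank ℤ ↥L = r ∧
      IsPrimitiveLattice L ∧
      ∀ j : Fin r, s j / 2 < succMin (L : Set (Fin (n + 1) → ℤ)) ((j : ℕ) + 1) ∧
        succMin (L : Set (Fin (n + 1) → ℤ)) ((j : ℕ) + 1) ≤ s j} := rfl
  set s' : ℕ → ℝ := fun m => if h : m < r then s ⟨m, h⟩ else 1 with hs'def
  have hs'1 : ∀ m, 1 ≤ s' m := by
    intro m
    rw [hs'def]
    dsimp only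
    split
    · exact hs _
    · exact le_refl 1
  have hs'0 : ∀ m, (0:ℝ) < s' m := fun m => lt_of_lt_of_le one_pos (hs'1 m)
  have hs'eq : ∀ (j : Fin r), s' j.val = s j := by
    intro j
    rw [hs'def]
    dsimp only
    rw [dif_pos j.2]
  -- the box finsets
  set M : ℕ → ℤ := fun m => Int.floor (3 * s' m) with hM
  have hM3 : ∀ m, (3:ℤ) ≤ M m := by
    intro m
    rw [hM]
    dsimp only
    rw [Int.le_floor]
    push_cast
    linarith [hs'1 m]
  have hMle : ∀ m, (M m : ℝ) ≤ 3 * s' m := by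
    intro m
    rw [hM]
    exact Int.floor_le _
  set box : Fin r → Finset (Fin (n+1) → ℤ) :=
    fun j => Fintype.piFinset (fun _ : Fin (n+1) => Finset.Icc (-(M j.val)) (M j.val)) with hbox
  set T : Finset (Fin r → (Fin (n+1) → ℤ)) := Fintype.piFinset box with hTdef
  have hTmem : ∀ u : Fin r → (Fin (n+1) → ℤ), (∀ j, inorm (u j) ≤ 3 * s' j.val) → u ∈ T := by
    intro u hu
    rw [hTdef, Fintype.mem_piFinset]
    intro j
    rw [hbox]
    dsimp only
    rw [Fintype.mem_piFinset]
    intro k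
    rw [Finset.mem_Icc]
    have h1 : |(u j k : ℝ)| ≤ 3 * s' j.val := le_trans (abs_coord_le (u j) k) (hu j)
    rw [abs_le] at h1
    constructor
    · rw [hM]
      dsimp only
      rw [_root_.neg_le, Int.le_floor]
      push_cast
      linarith [h1.1]
    · rw [hM]
      dsimp only
      rw [Int.le_floor]
      exact h1.2
  have hTcard : (T.card : ℝ) ≤ ∏ j : Fin r, (7 * s' j.val)^(n+1) := by
    rw [hTdef, Fintype.card_piFinset]
    push_cast
    apply Finset.prod_le_prod
    · intro j _
      positivity
    · intro j _
      rw [hbox]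
      dsimp only
      rw [Fintype.card_piFinset]
      have hnn : (0:ℤ) ≤ M j.val + 1 - -(M j.val) := by linarith [hM3 j.val]
      have hc : (((Finset.Icc (-(M j.val)) (M j.val)).card : ℕ) : ℝ) ≤ 7 * s' j.val := by
        rw [Int.card_Icc]
        have h2 : (((M j.val + 1 - -(M j.val)).toNat : ℕ) : ℝ)
            = ((M j.val + 1 - -(M j.val) : ℤ) : ℝ) := by
          have h3 := Int.toNat_of_nonneg hnn
          exact_mod_cast congrArg (fun x : ℤ => (x : ℝ)) h3
        rw [h2]
        push_cast
        have := hMle j.val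
        have := hs'1 j.val
        linarith
      calc ((∏ _k : Fin (n+1), (Finset.Icc (-(M j.val)) (M j.val)).card : ℕ) : ℝ)
          = (((Finset.Icc (-(M j.val)) (M j.val)).card : ℕ) : ℝ)^(n+1) := by
            push_cast
            rw [Finset.prod_const, Finset.card_univ, Fintype.card_fin]
        _ ≤ (7 * s' j.val)^(n+1) := by
            apply pow_le_pow_left₀ (by positivity) hc
  -- short vectors in each lattice of S
  have hwex : ∀ L ∈ S, ∃ w : Fin r → (Fin (n+1) → ℤ), (∀ i, w i ∈ L) ∧
      (∀ i, inorm (w i) ≤ 2 * s' i.val) ∧ LinearIndependent ℝ (⇑(fmap n) ∘ w) := by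
    intro L hL
    rw [hSdef, Set.mem_setOf_eq] at hL
    obtain ⟨hrk, hprim, hmins⟩ := hL
    apply exists_w
    intro j hj
    have hj' : s' j = s ⟨j, hj⟩ := by
      rw [hs'def]
      dsimp only
      rw [dif_pos hj]
    have hmin := hmins ⟨j, hj⟩
    refine dim_ge j (hs'0 j) ?_ ?_
    · rw [hj']; exact hmin.1
    · rw [hj']; exact hmin.2
  -- finiteness
  set g : (Fin r → (Fin (n+1) → ℤ)) → Submodule ℤ (Fin (n+1) → ℤ) :=
    fun u => Submodule.comap (fmap n) ((span ℝ (Set.range (⇑(fmap n) ∘ u))).restrictScalars ℤ)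
    with hg
  have hSsub : S ⊆ g '' (T : Set _) := by
    intro L hL
    obtain ⟨w, hwL, hws, hwli⟩ := hwex L hL
    have hmemT : w ∈ T :=
      hTmem w (fun j => le_trans (hws j) (by linarith [hs'0 j.val]))
    have hrank : (r:ℕ) ≤ finrank ℝ (span ℝ (Set.range (⇑(fmap n) ∘ w))) := by
      rw [finrank_span_eq_card hwli, Fintype.card_fin]
    have hLS := hL
    rw [hSdef, Set.mem_setOf_eq] at hLS
    exact ⟨w, hmemT, (determines hLS.1 hLS.2.1 w hwL hrank).symm⟩
  have hfin : S.Finite := Set.Finite.subset (T.finite_toSet.image g) hSsub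
  refine ⟨hfin, ?_⟩
  set F := hfin.toFinset with hF
  set Tup : Submodule ℤ (Fin (n+1) → ℤ) → Finset (Fin r → (Fin (n+1) → ℤ)) :=
    fun L => T.filter (fun u => (∀ j, u j ∈ L) ∧
      r ≤ finrank ℝ (span ℝ (Set.range (⇑(fmap n) ∘ u)))) with hTup
  have hdisj : ∀ L ∈ F, ∀ L' ∈ F, L ≠ L' → Disjoint (Tup L) (Tup L') := by
    intro L hL L' hL' hne
    rw [Finset.disjoint_left]
    intro u hu hu'
    rw [hTup] at hu hu'
    simp only [Finset.mem_filter] at hu hu'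
    have hLS : L ∈ S := (hfin.mem_toFinset).mp hL
    have hLS' : L' ∈ S := (hfin.mem_toFinset).mp hL'
    rw [hSdef, Set.mem_setOf_eq] at hLS hLS'
    exact hne ((determines hLS.1 hLS.2.1 u hu.2.1 hu.2.2).trans
      (determines hLS'.1 hLS'.2.1 u hu'.2.1 hu'.2.2).symm)
  set mR : ℝ := ∏ j : Fin r, ∏ i : Fin j.val, (s' j.val / (2 * (r:ℝ) * s' i.val)) with hmR
  have hlow : ∀ L ∈ F, mR ≤ ((Tup L).card : ℝ) := by
    intro L hL
    have hLS : L ∈ S := (hfin.mem_toFinset).mp hL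
    obtain ⟨w, hwL, hws, hwli⟩ := hwex L hLS
    rw [hmR, hTup]
    exact card_tup_ge hr s' hs'1 w hwL hws hwli T hTmem
  have hsum : (F.card : ℝ) * mR ≤ (T.card : ℝ) := by
    have h2 : ∑ L ∈ F, (Tup L).card = (F.biUnion Tup).card := (Finset.card_biUnion hdisj).symm
    have h3 : (F.biUnion Tup) ⊆ T := by
      intro u hu
      rw [Finset.mem_biUnion] at hu
      obtain ⟨L, _, hu⟩ := hu
      rw [hTup] at hu
      exact (Finset.mem_filter.mp hu).1
    have h1 : ∑ L ∈ F, ((Tup L).card : ℝ) ≤ (T.card:ℝ) := by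
      have h5 : ∑ L ∈ F, (Tup L).card ≤ T.card := h2 ▸ Finset.card_le_card h3
      calc ∑ L ∈ F, ((Tup L).card:ℝ) = ((∑ L ∈ F, (Tup L).card : ℕ) : ℝ) := by push_cast; rfl
        _ ≤ _ := Nat.cast_le.mpr h5
    have h4 : (F.card : ℝ) * mR ≤ ∑ L ∈ F, ((Tup L).card:ℝ) := by
      have h6 := Finset.card_nsmul_le_sum F (fun L => ((Tup L).card:ℝ)) mR hlow
      rwa [nsmul_eq_mul] at h6
    linarith
  -- convert to range products and conclude
  have hTbound : (T.card : ℝ) ≤ ∏ j ∈ Finset.range r, (7 * s' j)^(n+1) := by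
    refine le_trans hTcard (le_of_eq ?_)
    exact Fin.prod_univ_eq_prod_range (fun m => (7 * s' m)^(n+1)) r
  have hmR2 : mR = ∏ j ∈ Finset.range r, ∏ i ∈ Finset.range j, (s' j / (2*(r:ℝ)*s' i)) := by
    rw [hmR]
    rw [← Fin.prod_univ_eq_prod_range (fun m => ∏ i ∈ Finset.range m, (s' m / (2*(r:ℝ)*s' i))) r]
    apply Finset.prod_congr rfl
    intro j _
    exact Fin.prod_univ_eq_prod_range (fun m => s' j.val / (2*(r:ℝ)*s' m)) j.val
  have hmain : (F.card:ℝ) * (∏ j ∈ Finset.range r, ∏ i ∈ Finset.range j, (s' j/(2*(r:ℝ)*s' i)))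
      ≤ ∏ j ∈ Finset.range r, (7*s' j)^(n+1) := by
    rw [← hmR2]
    exact le_trans hsum hTbound
  have hfinal := final_arith n r hr hrn s' hs'1 (F.card:ℝ) hmain
  have hPP : ∏ j ∈ Finset.range r, s' j ^ (n + r - 2*j)
      = ∏ j : Fin r, s j ^ (n + r - 2*(j:ℕ)) := by
    rw [← Fin.prod_univ_eq_prod_range (fun m => s' m ^ (n + r - 2*m)) r]
    apply Finset.prod_congr rfl
    intro j _
    rw [hs'eq j]
  have hncard : (S.ncard : ℝ) = (F.card : ℝ) := by
    rw [hF, Set.ncard_eq_toFinset_card S hfin]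
  rw [hncard, ← hPP]
  exact hfinal
end
end

section
/- Let d ≥ 2, n ≥ 3, p prime, r ≥ 1, e ∈ {0,…,r}. Suppose a ∈ (ℤ/p^rℤ)^{N_{d,n}} has at least one unit coordinate and there exists x ∈ (ℤ/p^rℤ)^{n+1} with at least one unit coordinate such that f_a(x) ≡ 0 mod p^r and v_p(∇f_a(x)) = e. Then σ(a; p^r) ≥ p^{−(e+1)n}, where σ(a; p^r) = p^{−rn} · #{ b ∈ (ℤ/p^rℤ)^{n+1} : b has a unit coordinate and f_a(b) ≡ 0 mod p^r }. -/
noncomputable section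

/-- The degree-`d` form with coefficient vector `a`, evaluated at `x`. -/
def evalForm {n d M : ℕ} (a : MonIdx n d → ZMod M) (x : Fin (n + 1) → ZMod M) : ZMod M :=
  ∑ m : MonIdx n d, a m * ∏ i, x i ^ (m.1 i)

/-- The `j`-th partial derivative of the form `f_a`, evaluated at `x`. -/
def gradForm {n d M : ℕ} (a : MonIdx n d → ZMod M) (x : Fin (n + 1) → ZMod M)
    (j : Fin (n + 1)) : ZMod M :=
  ∑ m : MonIdx n d, a m * (m.1 j : ZMod M) *
    ∏ i, x i ^ (m.1 i - if i = j then 1 else 0)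

/-- The `p`-adic valuation of a vector `v ∈ (ℤ/p^rℤ)^{n+1}`. -/
def vecVal {n : ℕ} (p r : ℕ) (v : Fin (n + 1) → ZMod (p ^ r)) : ℕ :=
  sSup {e : ℕ | e ≤ r ∧ ∀ k, ((p : ZMod (p ^ r)) ^ e ∣ v k)}

/-- The local density `σ(a; p^r)`. -/
def sigmaLoc (n d p r : ℕ) (a : MonIdx n d → ZMod (p ^ r)) : ℝ :=
  (Nat.card {b : Fin (n + 1) → ZMod (p ^ r) //
      (∃ k, IsUnit (b k)) ∧ evalForm a b = 0} : ℝ) / (p : ℝ) ^ (r * n)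

namespace St18Aux


variable {R S : Type} [CommRing R] [CommRing S] {n d : ℕ}

def evalF (a : MonIdx n d → R) (x : Fin (n + 1) → R) : R :=
  ∑ m : MonIdx n d, a m * ∏ i, x i ^ (m.1 i)

def gradF (a : MonIdx n d → R) (x : Fin (n + 1) → R) (j : Fin (n + 1)) : R :=
  ∑ m : MonIdx n d, a m * (m.1 j : R) * ∏ i, x i ^ (m.1 i - if i = j then 1 else 0)

lemma evalF_eq_evalForm {M : ℕ} (a : MonIdx n d → ZMod M) (x : Fin (n + 1) → ZMod M) :
    evalF a x = evalForm a x := rfl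

lemma gradF_eq_gradForm {M : ℕ} (a : MonIdx n d → ZMod M) (x : Fin (n + 1) → ZMod M) (j) :
    gradF a x j = gradForm a x j := rfl

lemma evalF_map (φ : R →+* S) (a : MonIdx n d → R) (x : Fin (n + 1) → R) :
    φ (evalF a x) = evalF (fun m => φ (a m)) (fun i => φ (x i)) := by
  simp [evalF, map_sum, map_mul, map_prod, map_pow]

lemma gradF_map (φ : R →+* S) (a : MonIdx n d → R) (x : Fin (n + 1) → R) (j) :
    φ (gradF a x j) = gradF (fun m => φ (a m)) (fun i => φ (x i)) j := by
  simp [gradF, map_sum, map_mul, map_prod, map_pow]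




lemma pow_expand (c x u : R) (hc : c ∣ u) (m : ℕ) :
    c ^ 2 ∣ (x + u) ^ m - x ^ m - m * u * x ^ (m - 1) := by
  obtain ⟨v, rfl⟩ := hc
  induction m with
  | zero => simp
  | succ k ih =>
    obtain ⟨A, hA⟩ := ih
    have hx : (k : R) * x ^ (k - 1) * x = k * x ^ k := by
      cases k with
      | zero => simp
      | succ l => simp [pow_succ]; ring
    refine ⟨(x + c * v) * A + k * v * v * x ^ (k - 1), ?_⟩
    have h1 : (x + c * v) ^ (k + 1) = (x + c * v) * (x + c * v) ^ k := by ring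
    rw [h1]
    have h2 : (x + c * v) ^ k = x ^ k + k * (c * v) * x ^ (k - 1) + c ^ 2 * A := by
      linear_combination hA
    rw [h2]
    push_cast
    linear_combination (c * v) * hx

lemma prod_expand {ι : Type} [DecidableEq ι] (c : R) (F G H : ι → R) (s : Finset ι)
    (h1 : ∀ i ∈ s, c ^ 2 ∣ F i - G i - H i) (h2 : ∀ i ∈ s, c ∣ H i) :
    c ^ 2 ∣ ∏ i ∈ s, F i - ∏ i ∈ s, G i - ∑ j ∈ s, H j * ∏ i ∈ s.erase j, G i := by
  induction s using Finset.induction_on with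
  | empty => simp
  | insert k s hk ih =>
    obtain ⟨A, hA⟩ := h1 k (Finset.mem_insert_self k s)
    obtain ⟨B, hB⟩ := ih (fun i hi => h1 i (Finset.mem_insert_of_mem hi))
      (fun i hi => h2 i (Finset.mem_insert_of_mem hi))
    obtain ⟨h', hh'⟩ := h2 k (Finset.mem_insert_self k s)
    have hSdvd : c ∣ ∑ j ∈ s, H j * ∏ i ∈ s.erase j, G i :=
      Finset.dvd_sum fun j hj => ((h2 j (Finset.mem_insert_of_mem hj)).mul_right _)
    obtain ⟨SS, hSS⟩ := hSdvd
    rw [Finset.prod_insert hk, Finset.prod_insert hk, Finset.sum_insert hk,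
      Finset.erase_insert hk]
    have hsum : ∑ j ∈ s, H j * ∏ i ∈ (insert k s).erase j, G i
        = ∑ j ∈ s, H j * (G k * ∏ i ∈ s.erase j, G i) := by
      refine Finset.sum_congr rfl fun j hj => ?_
      rw [Finset.erase_insert_of_ne (by rintro rfl; exact hk hj),
        Finset.prod_insert (fun h => hk (Finset.mem_of_mem_erase h))]
    rw [hsum]
    refine ⟨A * ∏ i ∈ s, F i + (G k + H k) * B + h' * SS, ?_⟩
    have hexp : ∑ j ∈ s, H j * (G k * ∏ i ∈ s.erase j, G i)
        = G k * ∑ j ∈ s, H j * ∏ i ∈ s.erase j, G i := by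
      rw [Finset.mul_sum]; exact Finset.sum_congr rfl fun j _ => by ring
    rw [hexp, hSS]
    linear_combination (∏ i ∈ s, F i) * hA + (G k + H k) * hB + (c * SS) * hh' + (G k + H k) * hSS


lemma evalF_expand (a : MonIdx n d → R) (x u : Fin (n + 1) → R) (c : R)
    (hc : ∀ i, c ∣ u i) :
    c ^ 2 ∣ evalF a (fun i => x i + u i) - evalF a x - ∑ j, u j * gradF a x j := by
  classical
  have swap : ∑ j, u j * gradF a x j
      = ∑ m : MonIdx n d, a m * ∑ j, ((m.1 j : R) * u j * x j ^ (m.1 j - 1)) *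
          ∏ i ∈ Finset.univ.erase j, x i ^ (m.1 i) := by
    unfold gradF
    simp_rw [Finset.mul_sum]
    rw [Finset.sum_comm]
    refine Finset.sum_congr rfl fun m _ => ?_
    refine Finset.sum_congr rfl fun j _ => ?_
    have hsplit : ∏ i, x i ^ (m.1 i - if i = j then 1 else 0)
        = x j ^ (m.1 j - 1) * ∏ i ∈ Finset.univ.erase j, x i ^ (m.1 i) := by
      rw [← Finset.mul_prod_erase Finset.univ _ (Finset.mem_univ j)]
      simp only [if_pos rfl]
      congr 1
      exact Finset.prod_congr rfl fun i hi => by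
        rw [if_neg (Finset.ne_of_mem_erase hi), Nat.sub_zero]
    rw [hsplit]; ring
  rw [swap]
  unfold evalF
  rw [← Finset.sum_sub_distrib, ← Finset.sum_sub_distrib]
  refine Finset.dvd_sum fun m _ => ?_
  have h := prod_expand c (fun i => (x i + u i) ^ (m.1 i)) (fun i => x i ^ (m.1 i))
    (fun i => (m.1 i : R) * u i * x i ^ (m.1 i - 1)) Finset.univ
    (fun i _ => pow_expand c (x i) (u i) (hc i) (m.1 i))
    (fun i _ => ((hc i).mul_left _).mul_right _)
  obtain ⟨W, hW⟩ := h
  exact ⟨a m * W, by linear_combination a m * hW⟩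



variable {p r : ℕ}

lemma zmod_isUnit_iff (hp : p.Prime) (hr : 1 ≤ r) (z : ZMod (p ^ r)) :
    IsUnit z ↔ ¬ (p : ℕ) ∣ z.val := by
  haveI : NeZero (p ^ r) := ⟨pow_ne_zero r hp.ne_zero⟩
  conv_lhs => rw [← ZMod.natCast_zmod_val z]
  rw [ZMod.isUnit_iff_coprime, Nat.coprime_pow_right_iff hr, Nat.coprime_comm,
    Nat.Prime.coprime_iff_not_dvd hp]

lemma zmod_isUnit_add (hp : p.Prime) (hr : 1 ≤ r) (z w : ZMod (p ^ r))
    (hz : IsUnit z) (hw : (p : ZMod (p ^ r)) ∣ w) : IsUnit (z + w) := by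
  haveI : NeZero (p ^ r) := ⟨pow_ne_zero r hp.ne_zero⟩
  rw [zmod_isUnit_iff hp hr] at hz ⊢
  rw [← ZMod.natCast_eq_zero_iff, ZMod.natCast_val] at hz ⊢
  intro h
  apply hz
  obtain ⟨c, rfl⟩ := hw
  have h2 : (ZMod.castHom (dvd_pow_self p (by omega : r ≠ 0)) (ZMod p)) (z + p * c)
      = (ZMod.castHom (dvd_pow_self p (by omega : r ≠ 0)) (ZMod p)) z := by
    rw [map_add, map_mul, map_natCast]; simp
  rw [ZMod.castHom_apply, ZMod.castHom_apply] at h2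
  rw [← h2]
  exact h

lemma zmod_mul_cancel (hp : p.Prime) {e : ℕ} (he : e + 1 ≤ r)
    (v1 v2 : ZMod (p ^ (r - (e + 1))))
    (h : (p : ZMod (p ^ r)) ^ (e + 1) * (v1.val : ZMod (p ^ r))
       = (p : ZMod (p ^ r)) ^ (e + 1) * (v2.val : ZMod (p ^ r))) : v1 = v2 := by
  haveI : NeZero (p ^ (r - (e + 1))) := ⟨pow_ne_zero _ hp.ne_zero⟩
  have h' : ((p ^ (e + 1) * v1.val : ℕ) : ZMod (p ^ r))
      = ((p ^ (e + 1) * v2.val : ℕ) : ZMod (p ^ r)) := by push_cast; exact h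
  rw [ZMod.natCast_eq_natCast_iff] at h'
  have hmod : p ^ r = p ^ (e + 1) * p ^ (r - (e + 1)) := by
    rw [← pow_add]; congr 1; omega
  rw [hmod] at h'
  have h2 := Nat.ModEq.mul_left_cancel' (pow_ne_zero _ hp.ne_zero) h'
  exact ZMod.val_injective _ (h2.eq_of_lt_of_lt (ZMod.val_lt v1) (ZMod.val_lt v2))


open Polynomial in
lemma caseB (p r e : ℕ) [hpf : Fact p.Prime] (h2e : 2 * e + 1 < r)
    (a : MonIdx n d → ZMod (p ^ r)) (x : Fin (n + 1) → ZMod (p ^ r)) (j : Fin (n + 1))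
    (hfx : evalForm a x = 0)
    (hdvd : ∀ k, (p : ZMod (p ^ r)) ^ e ∣ gradForm a x k)
    (hj : ¬ (p : ZMod (p ^ r)) ^ (e + 1) ∣ gradForm a x j)
    (u : Fin (n + 1) → ZMod (p ^ r)) (hu : ∀ i, (p : ZMod (p ^ r)) ^ (e + 1) ∣ u i) :
    ∃ ρ, (p : ZMod (p ^ r)) ∣ ρ - x j ∧
      evalForm a (Function.update (fun i => x i + u i) j ρ) = 0 := by
  classical
  haveI : NeZero (p ^ r) := ⟨pow_ne_zero r hpf.out.ne_zero⟩
  set π := PadicInt.toZModPow (p := p) r with hπdef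
  have hπnat : ∀ k : ℕ, π ((k : ℤ_[p])) = (k : ZMod (p ^ r)) := fun k => map_natCast π k
  have hlift : ∀ z : ZMod (p ^ r), π ((z.val : ℤ_[p])) = z := fun z => by
    rw [hπnat, ZMod.natCast_zmod_val]
  set A : MonIdx n d → ℤ_[p] := fun m => ((a m).val : ℤ_[p]) with hA
  set X : Fin (n + 1) → ℤ_[p] := fun i => ((x i).val : ℤ_[p]) with hX
  choose w hw using hu
  set U : Fin (n + 1) → ℤ_[p] := fun i => (p : ℤ_[p]) ^ (e + 1) * ((w i).val : ℤ_[p]) with hU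
  have hπA : ∀ m, π (A m) = a m := fun m => hlift _
  have hπAfun : (fun m => π (A m)) = a := funext hπA
  have hπX : ∀ i, π (X i) = x i := fun i => hlift _
  have hπXfun : (fun i => π (X i)) = x := funext hπX
  have hπU : ∀ i, π (U i) = u i := fun i => by
    rw [hU]; simp only; rw [map_mul, map_pow, hπnat, hlift, ← hw]
  have hker : ∀ z : ℤ_[p], π z = 0 ↔ (p : ℤ_[p]) ^ r ∣ z := fun z => by
    rw [← RingHom.mem_ker, hπdef, PadicInt.ker_toZModPow, Ideal.mem_span_singleton]
  have hliftdvd : ∀ (s : ℕ) (z : ℤ_[p]), s ≤ r → (p : ZMod (p ^ r)) ^ s ∣ π z →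
      (p : ℤ_[p]) ^ s ∣ z := by
    intro s z hs hdz
    obtain ⟨c, hc⟩ := hdz
    have h0 : π (z - (p : ℤ_[p]) ^ s * ((c.val : ℤ_[p]))) = 0 := by
      rw [map_sub, map_mul, map_pow, hπnat, hlift, ← hc, sub_self]
    rw [hker] at h0
    obtain ⟨q, hq⟩ := h0
    refine ⟨(c.val : ℤ_[p]) + (p : ℤ_[p]) ^ (r - s) * q, ?_⟩
    have hps : (p : ℤ_[p]) ^ s * (p : ℤ_[p]) ^ (r - s) = (p : ℤ_[p]) ^ r := by
      rw [← pow_add]; congr 1; omega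
    have hz2 : z = (p : ℤ_[p]) ^ s * (c.val : ℤ_[p]) + (p : ℤ_[p]) ^ r * q := by
      linear_combination hq
    rw [hz2, ← hps]; ring
  have hgradπ : ∀ (yv : Fin (n + 1) → ℤ_[p]) (k), π (gradF A yv k)
      = gradForm a (fun i => π (yv i)) k := by
    intro yv k
    rw [gradF_map π A yv k, hπAfun, gradF_eq_gradForm]
  have hevalπ : ∀ yv : Fin (n + 1) → ℤ_[p], π (evalF A yv)
      = evalForm a (fun i => π (yv i)) := by
    intro yv
    rw [evalF_map π A yv, hπAfun, evalF_eq_evalForm]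
  have hgX : ∀ k, (p : ℤ_[p]) ^ e ∣ gradF A X k := fun k => by
    refine hliftdvd e _ (by omega) ?_
    rw [hgradπ, hπXfun]; exact hdvd k
  have hgXj : ¬ (p : ℤ_[p]) ^ (e + 1) ∣ gradF A X j := by
    rintro ⟨q, hq⟩
    apply hj
    refine ⟨π q, ?_⟩
    have h2 := congrArg π hq
    rw [hgradπ, hπXfun, map_mul, map_pow, hπnat] at h2
    exact h2
  set Y : Fin (n + 1) → ℤ_[p] := fun i => X i + U i with hY
  set F : Polynomial ℤ_[p] := ∑ m : MonIdx n d,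
    Polynomial.C (A m * ∏ i ∈ Finset.univ.erase j, (Y i) ^ (m.1 i)) *
      Polynomial.X ^ (m.1 j) with hF
  have hFeval : ∀ t, F.eval t = evalF A (Function.update Y j t) := by
    intro t
    rw [hF, eval_finset_sum]
    simp only [eval_mul, eval_C, eval_pow, eval_X]
    unfold evalF
    refine Finset.sum_congr rfl fun m _ => ?_
    rw [← Finset.mul_prod_erase Finset.univ _ (Finset.mem_univ j), Function.update_self]
    have : ∏ i ∈ Finset.univ.erase j, (Function.update Y j t i) ^ (m.1 i)
        = ∏ i ∈ Finset.univ.erase j, (Y i) ^ (m.1 i) :=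
      Finset.prod_congr rfl fun i hi => by
        rw [Function.update_of_ne (Finset.ne_of_mem_erase hi)]
    rw [this]; ring
  have hFderiv : ∀ t, F.derivative.eval t = gradF A (Function.update Y j t) j := by
    intro t
    rw [hF, derivative_sum]
    rw [eval_finset_sum]
    simp only [derivative_C_mul, derivative_X_pow, eval_mul, eval_C, eval_pow, eval_X]
    unfold gradF
    refine Finset.sum_congr rfl fun m _ => ?_
    rw [← Finset.mul_prod_erase Finset.univ
      (fun i => (Function.update Y j t i) ^ (m.1 i - if i = j then 1 else 0))
      (Finset.mem_univ j), Function.update_self, if_pos rfl]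
    have : ∏ i ∈ Finset.univ.erase j,
        (Function.update Y j t i) ^ (m.1 i - if i = j then 1 else 0)
        = ∏ i ∈ Finset.univ.erase j, (Y i) ^ (m.1 i) :=
      Finset.prod_congr rfl fun i hi => by
        rw [Function.update_of_ne (Finset.ne_of_mem_erase hi),
          if_neg (Finset.ne_of_mem_erase hi), Nat.sub_zero]
    rw [this]; ring
  have hupdY : Function.update Y j (Y j) = Y := Function.update_eq_self j Y
  have hUdvd : ∀ i, (p : ℤ_[p]) ^ (e + 1) ∣ U i := fun i => Dvd.intro _ rfl
  have hexp := evalF_expand A X U ((p : ℤ_[p]) ^ (e + 1)) hUdvd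
  have hcc : ((p : ℤ_[p]) ^ (e + 1)) ^ 2 = (p : ℤ_[p]) ^ (2 * e + 2) := by
    rw [← pow_mul]; congr 1; omega
  have hEX : (p : ℤ_[p]) ^ (2 * e + 1) ∣ evalF A X := by
    refine dvd_trans (pow_dvd_pow _ (by omega : 2 * e + 1 ≤ r)) ?_
    rw [← hker, hevalπ, hπXfun, hfx]
  have hsum : (p : ℤ_[p]) ^ (2 * e + 1) ∣ ∑ jj, U jj * gradF A X jj := by
    refine Finset.dvd_sum fun jj _ => ?_
    have hpe : (p : ℤ_[p]) ^ (2 * e + 1) = (p : ℤ_[p]) ^ (e + 1) * (p : ℤ_[p]) ^ e := by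
      rw [← pow_add]; congr 1; omega
    rw [hpe]
    exact mul_dvd_mul (hUdvd jj) (hgX jj)
  have hEY : (p : ℤ_[p]) ^ (2 * e + 1) ∣ evalF A Y := by
    have h1 : evalF A Y = (evalF A (fun i => X i + U i) - evalF A X
        - ∑ jj, U jj * gradF A X jj) + evalF A X + ∑ jj, U jj * gradF A X jj := by
      rw [hY]; ring
    rw [h1]
    refine dvd_add (dvd_add ?_ hEX) hsum
    refine dvd_trans (pow_dvd_pow _ (by omega : 2 * e + 1 ≤ 2 * e + 2)) ?_
    rw [← hcc]; exact hexp
  have hGY : F.derivative.eval (Y j) = gradF A Y j := by rw [hFderiv, hupdY]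
  have hdiff : (p : ℤ_[p]) ^ (e + 1) ∣ gradF A Y j - gradF A X j := by
    set π2 := PadicInt.toZModPow (p := p) (e + 1) with hπ2
    have h0 : π2 (gradF A Y j - gradF A X j) = 0 := by
      rw [map_sub, gradF_map π2, gradF_map π2]
      have hYX : (fun i => π2 (Y i)) = (fun i => π2 (X i)) := funext fun i => by
        rw [hY]; simp only
        rw [map_add, hU]; simp only
        rw [map_mul, map_pow, map_natCast π2 p]
        have hz : ((p : ZMod (p ^ (e + 1)))) ^ (e + 1) = 0 := by
          rw [← Nat.cast_pow, ZMod.natCast_self]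
        rw [hz, zero_mul, add_zero]
      rw [hYX, sub_self]
    rw [← RingHom.mem_ker, hπ2, PadicInt.ker_toZModPow, Ideal.mem_span_singleton] at h0
    exact h0
  have hgYe : (p : ℤ_[p]) ^ e ∣ gradF A Y j := by
    have h1 : gradF A Y j = (gradF A Y j - gradF A X j) + gradF A X j := by ring
    rw [h1]
    exact dvd_add (dvd_trans (pow_dvd_pow _ (by omega : e ≤ e + 1)) hdiff) (hgX j)
  have hgYne : ¬ (p : ℤ_[p]) ^ (e + 1) ∣ gradF A Y j := by
    intro hdd
    apply hgXj
    have h1 : gradF A X j = gradF A Y j - (gradF A Y j - gradF A X j) := by ring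
    rw [h1]
    exact dvd_sub hdd hdiff
  have hp1 : (1 : ℝ) < p := by exact_mod_cast hpf.out.one_lt
  have hnormG_ge : (p : ℝ) ^ (-(e : ℤ)) ≤ ‖gradF A Y j‖ := by
    by_contra hlt
    push_neg at hlt
    have h2 := (PadicInt.norm_lt_pow_iff_norm_le_pow_sub_one _ _).1 hlt
    have h3 : ‖gradF A Y j‖ ≤ (p : ℝ) ^ (-((e + 1 : ℕ) : ℤ)) := by
      convert h2 using 2; push_cast; ring
    rw [PadicInt.norm_le_pow_iff_mem_span_pow, Ideal.mem_span_singleton] at h3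
    exact hgYne h3
  have hnormF_le : ‖F.eval (Y j)‖ ≤ (p : ℝ) ^ (-((2 * e + 1 : ℕ) : ℤ)) := by
    rw [PadicInt.norm_le_pow_iff_mem_span_pow, Ideal.mem_span_singleton, hFeval, hupdY]
    exact hEY
  have hhyp : ‖F.eval (Y j)‖ < ‖F.derivative.eval (Y j)‖ ^ 2 := by
    rw [hGY]
    calc ‖F.eval (Y j)‖ ≤ (p : ℝ) ^ (-((2 * e + 1 : ℕ) : ℤ)) := hnormF_le
      _ < (p : ℝ) ^ (-(e : ℤ) + -(e : ℤ)) := by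
          apply zpow_lt_zpow_right₀ hp1; push_cast; omega
      _ = ((p : ℝ) ^ (-(e : ℤ))) ^ 2 := by
          rw [zpow_add₀ (by positivity : (p : ℝ) ≠ 0)]; ring
      _ ≤ ‖gradF A Y j‖ ^ 2 := by
          apply pow_le_pow_left₀ (by positivity) hnormG_ge
  obtain ⟨z, hz0, hz1, -, -⟩ := hensels_lemma hhyp
  have hzdvd : (p : ℤ_[p]) ∣ z - Y j := by
    rw [← PadicInt.norm_lt_one_iff_dvd]
    exact lt_of_lt_of_le hz1 (PadicInt.norm_le_one _)
  refine ⟨π z, ?_, ?_⟩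
  · have h1 : π z - x j = π (z - X j) := by rw [map_sub, hπX]
    rw [h1]
    have hzX : (p : ℤ_[p]) ∣ z - X j := by
      have h2 : z - X j = (z - Y j) + U j := by rw [hY]; ring
      rw [h2]
      exact dvd_add hzdvd
        (dvd_trans (dvd_pow_self _ (Nat.succ_ne_zero e)) (hUdvd j))
    obtain ⟨q, hq⟩ := hzX
    rw [hq, map_mul, hπnat]
    exact Dvd.intro _ rfl
  · have hvec : Function.update (fun i => x i + u i) j (π z)
        = fun i => π (Function.update Y j z i) := by
      funext i
      by_cases hij : i = j
      · subst hij; rw [Function.update_self, Function.update_self]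
      · rw [Function.update_of_ne hij, Function.update_of_ne hij, hY]
        simp only
        rw [map_add, hπX, hπU]
    rw [hvec, ← evalF_eq_evalForm]
    have h3 : evalF a (fun i => π (Function.update Y j z i))
        = π (evalF A (Function.update Y j z)) := by
      rw [evalF_map π, hπAfun]
    rw [h3, ← hFeval, ← Polynomial.coe_aeval_eq_eval, hz0, map_zero]


end St18Aux

open St18Aux

/-- Let `d ≥ 2`, `n ≥ 3`, `p` prime, `r ≥ 1`, `e ∈ {0,…,r}`. If
`a ∈ (ℤ/p^rℤ)^{N_{d,n}}` has a unit coordinate and there is `x ∈ (ℤ/p^rℤ)^{n+1}` with a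
unit coordinate such that `f_a(x) = 0` and `v_p(∇f_a(x)) = e`, then
`σ(a; p^r) ≥ p^{−(e+1)n}`. -/
theorem stmt18 (d n : ℕ) (hd : 2 ≤ d) (hn : 3 ≤ n) (p r e : ℕ) (hp : p.Prime)
    (hr : 1 ≤ r) (her : e ≤ r) (a : MonIdx n d → ZMod (p ^ r))
    (ha : ∃ k, IsUnit (a k))
    (hx : ∃ x : Fin (n + 1) → ZMod (p ^ r), (∃ k, IsUnit (x k)) ∧
      evalForm a x = 0 ∧ vecVal p r (gradForm a x) = e) :
    ((p : ℝ) ^ ((e + 1) * n))⁻¹ ≤ sigmaLoc n d p r a := by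
  classical
  haveI hpf : Fact p.Prime := ⟨hp⟩
  haveI : NeZero (p ^ r) := ⟨pow_ne_zero r hp.ne_zero⟩
  obtain ⟨x, ⟨k0, hk0⟩, hfx, hval⟩ := hx
  have hp1 : (1 : ℝ) ≤ (p : ℝ) := by exact_mod_cast hp.one_lt.le
  suffices hcard : p ^ ((r - (e + 1)) * n) ≤ Nat.card {b : Fin (n + 1) → ZMod (p ^ r) //
      (∃ k, IsUnit (b k)) ∧ evalForm a b = 0} by
    rw [sigmaLoc, le_div_iff₀ (by positivity), inv_mul_le_iff₀ (by positivity)]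
    calc (p : ℝ) ^ (r * n) ≤ (p : ℝ) ^ ((e + 1) * n) * (p : ℝ) ^ ((r - (e + 1)) * n) := by
          rw [← pow_add]
          have h9 : r ≤ (e + 1) + (r - (e + 1)) := le_add_tsub
          have hle : r * n ≤ (e + 1) * n + (r - (e + 1)) * n := by
            calc r * n ≤ ((e + 1) + (r - (e + 1))) * n := Nat.mul_le_mul h9 le_rfl
              _ = (e + 1) * n + (r - (e + 1)) * n := by ring
          exact pow_le_pow_right₀ hp1 hle
      _ ≤ (p : ℝ) ^ ((e + 1) * n) * (Nat.card {b : Fin (n + 1) → ZMod (p ^ r) //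
            (∃ k, IsUnit (b k)) ∧ evalForm a b = 0} : ℝ) := by
          have hnc : (p : ℝ) ^ ((r - (e + 1)) * n) ≤ (Nat.card {b : Fin (n + 1) → ZMod (p ^ r) //
              (∃ k, IsUnit (b k)) ∧ evalForm a b = 0} : ℝ) := by
            calc (p : ℝ) ^ ((r - (e + 1)) * n)
                = ((p ^ ((r - (e + 1)) * n) : ℕ) : ℝ) := by push_cast; ring
              _ ≤ _ := by exact_mod_cast hcard
          exact mul_le_mul_of_nonneg_left hnc (by positivity)
  by_cases hlt : e < r
  swap
  · have h0 : (r - (e + 1)) * n = 0 := by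
      have : r - (e + 1) = 0 := by omega
      rw [this, zero_mul]
    rw [h0, pow_zero]
    haveI : Nonempty {b : Fin (n + 1) → ZMod (p ^ r) //
        (∃ k, IsUnit (b k)) ∧ evalForm a b = 0} := ⟨⟨x, ⟨k0, hk0⟩, hfx⟩⟩
    exact Nat.card_pos
  · set T : Set ℕ := {e' : ℕ | e' ≤ r ∧ ∀ k, ((p : ZMod (p ^ r)) ^ e' ∣ gradForm a x k)}
      with hT
    have hval' : sSup T = e := hval
    have hbdd : BddAbove T := ⟨r, fun y hy => hy.1⟩
    have hmem : e ∈ T := by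
      rw [← hval']
      refine Nat.sSup_mem ⟨0, ?_⟩ hbdd
      exact ⟨Nat.zero_le r, fun k => by simpa using one_dvd _⟩
    have hdvd : ∀ k, (p : ZMod (p ^ r)) ^ e ∣ gradForm a x k := hmem.2
    have hjex : ∃ j, ¬ (p : ZMod (p ^ r)) ^ (e + 1) ∣ gradForm a x j := by
      by_contra hcon
      push_neg at hcon
      have hmem2 : e + 1 ∈ T := ⟨hlt, hcon⟩
      have := le_csSup hbdd hmem2
      rw [hval'] at this
      omega
    obtain ⟨j, hj⟩ := hjex
    have key : ∀ u : Fin (n + 1) → ZMod (p ^ r), (∀ i, (p : ZMod (p ^ r)) ^ (e + 1) ∣ u i) →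
        ∃ ρ, (p : ZMod (p ^ r)) ∣ ρ - x j ∧
          evalForm a (Function.update (fun i => x i + u i) j ρ) = 0 := by
      intro u hu
      by_cases hcase : r ≤ 2 * e + 1
      · refine ⟨x j + u j, ?_, ?_⟩
        · have h1 : x j + u j - x j = u j := by ring
          rw [h1]
          exact dvd_trans (dvd_pow_self _ (Nat.succ_ne_zero e)) (hu j)
        · have hupd : Function.update (fun i => x i + u i) j
              ((fun i => x i + u i) j) = fun i => x i + u i :=
            Function.update_eq_self j _
          rw [show x j + u j = (fun i => x i + u i) j from rfl, hupd]
          have hexp := evalF_expand a x u ((p : ZMod (p ^ r)) ^ (e + 1)) hu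
          have hc2 : ((p : ZMod (p ^ r)) ^ (e + 1)) ^ 2 = 0 := by
            rw [← pow_mul, ← Nat.cast_pow, ZMod.natCast_eq_zero_iff]
            exact pow_dvd_pow p (by omega)
          rw [hc2, zero_dvd_iff] at hexp
          have hterm : ∀ jj, u jj * gradF a x jj = 0 := by
            intro jj
            obtain ⟨w1, hw1⟩ := hu jj
            obtain ⟨w2, hw2⟩ := hdvd jj
            rw [gradF_eq_gradForm, hw1, hw2]
            have hz : (p : ZMod (p ^ r)) ^ (e + 1) * (p : ZMod (p ^ r)) ^ e = 0 := by
              rw [← pow_add, ← Nat.cast_pow, ZMod.natCast_eq_zero_iff]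
              exact pow_dvd_pow p (by omega)
            calc (p : ZMod (p ^ r)) ^ (e + 1) * w1 * ((p : ZMod (p ^ r)) ^ e * w2)
                = ((p : ZMod (p ^ r)) ^ (e + 1) * (p : ZMod (p ^ r)) ^ e) * (w1 * w2) := by
                  ring
              _ = 0 := by rw [hz, zero_mul]
          have hsz : ∑ jj, u jj * gradF a x jj = 0 :=
            Finset.sum_eq_zero fun jj _ => hterm jj
          have h2 : evalF a (fun i => x i + u i)
              = evalF a x + ∑ jj, u jj * gradF a x jj := by linear_combination hexp
          rw [← evalF_eq_evalForm, h2, hsz, evalF_eq_evalForm, hfx, add_zero]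
      · push_neg at hcase
        exact caseB p r e (by omega) a x j hfx hdvd hj u hu
    choose ρ hρ1 hρ2 using key
    haveI : NeZero (p ^ (r - (e + 1))) := ⟨pow_ne_zero _ hp.ne_zero⟩
    set V := ZMod (p ^ (r - (e + 1))) with hV
    set ug : ({i : Fin (n + 1) // i ≠ j} → V) → (Fin (n + 1) → ZMod (p ^ r)) :=
      fun g i => if h : i = j then 0
        else (p : ZMod (p ^ r)) ^ (e + 1) * (((g ⟨i, h⟩).val : ℕ) : ZMod (p ^ r)) with hug
    have hugdvd : ∀ g i, (p : ZMod (p ^ r)) ^ (e + 1) ∣ ug g i := by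
      intro g i
      rw [hug]
      dsimp only
      split
      · exact dvd_zero _
      · exact Dvd.intro _ rfl
    have hunit : ∀ g, ∃ k, IsUnit
        (Function.update (fun i => x i + ug g i) j (ρ (ug g) (hugdvd g)) k) := by
      intro g
      refine ⟨k0, ?_⟩
      set b := Function.update (fun i => x i + ug g i) j (ρ (ug g) (hugdvd g)) with hb
      have hdk : (p : ZMod (p ^ r)) ∣ b k0 - x k0 := by
        by_cases hk0j : k0 = j
        · subst hk0j
          rw [hb, Function.update_self]
          exact hρ1 _ _
        · rw [hb, Function.update_of_ne hk0j]
          have h1 : x k0 + ug g k0 - x k0 = ug g k0 := by ring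
          rw [h1]
          exact dvd_trans (dvd_pow_self _ (Nat.succ_ne_zero e)) (hugdvd g k0)
      have hbk : b k0 = x k0 + (b k0 - x k0) := by ring
      rw [hbk]
      exact zmod_isUnit_add hp hr _ _ hk0 hdk
    set Φ : ({i : Fin (n + 1) // i ≠ j} → V) → {b : Fin (n + 1) → ZMod (p ^ r) //
        (∃ k, IsUnit (b k)) ∧ evalForm a b = 0} :=
      fun g => ⟨Function.update (fun i => x i + ug g i) j (ρ (ug g) (hugdvd g)),
        hunit g, hρ2 _ _⟩ with hΦ
    have hΦinj : Function.Injective Φ := by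
      intro g g' hgg
      funext s
      have h1 := congrFun (congrArg Subtype.val hgg) s.1
      rw [hΦ] at h1
      dsimp only at h1
      rw [Function.update_of_ne s.2, Function.update_of_ne s.2] at h1
      have h2 : ug g s.1 = ug g' s.1 := by
        have := add_left_cancel h1
        exact this
      rw [hug] at h2
      dsimp only at h2
      rw [dif_neg s.2, dif_neg s.2] at h2
      have h3 := zmod_mul_cancel hp (by omega : e + 1 ≤ r) _ _ h2
      have : (⟨s.1, s.2⟩ : {i : Fin (n + 1) // i ≠ j}) = s := rfl
      rw [this] at h3
      exact h3
    calc p ^ ((r - (e + 1)) * n)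
        = Nat.card ({i : Fin (n + 1) // i ≠ j} → V) := by
          rw [Nat.card_eq_fintype_card, Fintype.card_fun]
          show p ^ ((r - (e + 1)) * n)
            = Fintype.card (ZMod (p ^ (r - (e + 1)))) ^ Fintype.card {i : Fin (n + 1) // i ≠ j}
          rw [ZMod.card]
          have hcs : Fintype.card {i : Fin (n + 1) // i ≠ j} = n := by
            have := Fintype.card_subtype_compl (fun i : Fin (n + 1) => i = j)
            simp only [Fintype.card_subtype_eq, Fintype.card_fin] at this
            simpa using this
          rw [hcs, ← pow_mul]
      _ ≤ _ := Nat.card_le_card_of_injective Φ hΦinj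
end
end
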